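/- arXiv:1112.4292 — 6 statements merged into one kernel-verified Lean document; each statement's English description precedes it below -/
import Mathlib

section
/- Let α < 1/2 and let k : {(t,s) : 0 < s < t} → [0,∞) satisfy k(t,s) ≤ C/(t−s). Then the integral operator f ↦ (t ↦ ∫₀^t k(t,s) |t^α − s^α| s^{−α} f(s) ds) is bounded on L²((0,∞), dt); i.e. there is C' with ∫₀^∞ (∫₀^t k(t,s)|t^α − s^α| s^{−α} f(s) ds)² dt ≤ C' ∫₀^∞ f(s)² ds for all nonnegative measurable f. -/
open MeasureTheory Set
open scoped ENNReal

lemma kernel_pointwise {α s t : ℝ} (hα : α < 1/2) (hs : 0 < s) (hst : s < t) :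
    |t ^ α - s ^ α| * s ^ (-α) ≤
      (max 1 |α|) * ((t - s) * (t ^ (max α 0 - 1) * s ^ (-(max α 0)))) := by
  have ht : 0 < t := hs.trans hst
  have hM1 : (1:ℝ) ≤ max 1 |α| := le_max_left _ _
  rcases le_or_gt 0 α with h0 | h0
  · rw [max_eq_left h0]
    have h1 : s ^ α ≤ t ^ α := Real.rpow_le_rpow hs.le hst.le h0
    rw [abs_of_nonneg (by linarith)]
    have key : t ^ α - s ^ α ≤ (t - s) * t ^ (α - 1) := by
      have e1 : (t - s) * t ^ (α - 1) = t ^ α - s * t ^ (α - 1) := by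
        rw [sub_mul]
        congr 1
        rw [show α = 1 + (α - 1) by ring, Real.rpow_add ht, Real.rpow_one]
        ring_nf
      have e2 : s * t ^ (α - 1) ≤ s ^ α := by
        have hsplit : s * t ^ (α - 1) = s ^ α * (s ^ (1 - α) * t ^ (α - 1)) := by
          rw [← mul_assoc, ← Real.rpow_add hs, show α + (1 - α) = 1 by ring,
            Real.rpow_one]
        rw [hsplit]
        have hb : s ^ (1 - α) * t ^ (α - 1) ≤ 1 := by
          rw [show α - 1 = -(1 - α) by ring, Real.rpow_neg ht.le]
          rw [mul_inv_le_iff₀ (Real.rpow_pos_of_pos ht _), one_mul]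
          exact Real.rpow_le_rpow hs.le hst.le (by linarith)
        calc s ^ α * (s ^ (1 - α) * t ^ (α - 1)) ≤ s ^ α * 1 :=
              mul_le_mul_of_nonneg_left hb (Real.rpow_nonneg hs.le _)
          _ = s ^ α := mul_one _
      rw [e1]; linarith
    calc (t ^ α - s ^ α) * s ^ (-α)
        ≤ ((t - s) * t ^ (α - 1)) * s ^ (-α) :=
          mul_le_mul_of_nonneg_right key (Real.rpow_nonneg hs.le _)
      _ = 1 * ((t - s) * (t ^ (α - 1) * s ^ (-α))) := by ring
      _ ≤ (max 1 |α|) * ((t - s) * (t ^ (α - 1) * s ^ (-α))) := by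
          apply mul_le_mul_of_nonneg_right hM1
          have h2 := Real.rpow_nonneg ht.le (α - 1)
          have h3 := Real.rpow_nonneg hs.le (-α)
          nlinarith
  · -- α < 0
    rw [max_eq_right h0.le]
    set β := -α with hβ
    have hβ0 : 0 < β := by simp [hβ]; linarith
    have hMβ : β ≤ max 1 |α| := by
      rw [abs_of_neg h0]; exact le_max_right _ _
    set x := s / t with hx
    have hx0 : 0 < x := div_pos hs ht
    have hx1 : x < 1 := (div_lt_one ht).2 hst
    have hts : t ^ α ≤ s ^ α := by
      rw [show α = -β by rw [hβ]; ring, Real.rpow_neg ht.le, Real.rpow_neg hs.le]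
      exact inv_anti₀ (Real.rpow_pos_of_pos hs _)
        (Real.rpow_le_rpow hs.le hst.le hβ0.le)
    have habs : |t ^ α - s ^ α| = s ^ α - t ^ α := by
      rw [abs_of_nonpos (by linarith), neg_sub]
    have hxα : t ^ α * s ^ (-α) = x ^ β := by
      rw [hx, Real.div_rpow hs.le ht.le, show α = -β by rw [hβ]; ring,
        Real.rpow_neg ht.le β, show -(-β) = β by ring, div_eq_mul_inv, mul_comm]
    have hLHS : (s ^ α - t ^ α) * s ^ (-α) = 1 - x ^ β := by
      rw [sub_mul, ← Real.rpow_add hs, add_neg_cancel, Real.rpow_zero, hxα]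
    have hRHS : (t - s) * (t ^ ((0:ℝ) - 1) * s ^ (-(0:ℝ))) = 1 - x := by
      rw [neg_zero, Real.rpow_zero, show (0:ℝ) - 1 = -1 by ring,
        Real.rpow_neg_one, mul_one, hx]
      field_simp
    rw [habs, hLHS, hRHS]
    rcases le_or_gt β 1 with hβ1 | hβ1
    · have hxx : x ^ (1:ℝ) ≤ x ^ β :=
        Real.rpow_le_rpow_of_exponent_ge hx0 hx1.le hβ1
      rw [Real.rpow_one] at hxx
      nlinarith
    · have hb := one_add_mul_self_le_rpow_one_add (s := x - 1) (by linarith) hβ1.le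
      rw [show (1:ℝ) + (x - 1) = x by ring] at hb
      nlinarith

lemma lint_Ioo {r t : ℝ} (hr : -1 < r) (ht : 0 < t) :
    ∫⁻ s in Ioo (0:ℝ) t, ENNReal.ofReal (s ^ r) = ENNReal.ofReal (t ^ (r+1) / (r+1)) := by
  rw [← ofReal_integral_eq_lintegral_ofReal
    ((intervalIntegral.integrableOn_Ioo_rpow_iff ht).2 hr)
    (by filter_upwards [ae_restrict_mem measurableSet_Ioo] with s hs using
      Real.rpow_nonneg hs.1.le _)]
  congr 1
  rw [← integral_Ioc_eq_integral_Ioo, ← intervalIntegral.integral_of_le ht.le,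
    integral_rpow (Or.inl hr), Real.zero_rpow (by linarith), sub_zero]

lemma lint_Ioi {r s : ℝ} (hr : r < -1) (hs : 0 < s) :
    ∫⁻ t in Ioi s, ENNReal.ofReal (t ^ r) = ENNReal.ofReal (-s ^ (r+1) / (r+1)) := by
  rw [← ofReal_integral_eq_lintegral_ofReal (integrableOn_Ioi_rpow_of_lt hr hs)
    (by filter_upwards [ae_restrict_mem measurableSet_Ioi] with t htm using
      Real.rpow_nonneg (hs.trans htm).le _)]
  congr 1
  exact integral_Ioi_rpow_of_lt hr hs

/-- Schur-test estimate: for `α < 1/2` and a kernel `k(t,s) ≤ C/(t−s)` on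
`0 < s < t`, the operator `f ↦ ∫₀^t k(t,s) |t^α − s^α| s^{−α} f(s) ds`
is bounded on `L²((0,∞), dt)`. -/
theorem stmt_2 (α : ℝ) (hα : α < 1 / 2) (C : ℝ) (k : ℝ → ℝ → ℝ)
    (hk0 : ∀ t s, 0 < s → s < t → 0 ≤ k t s)
    (hk : ∀ t s, 0 < s → s < t → k t s ≤ C / (t - s)) :
    ∃ C' : ℝ, 0 < C' ∧ ∀ f : ℝ → ℝ, Measurable f → (∀ s, 0 ≤ f s) →
      IntegrableOn (fun s => (f s) ^ 2) (Ioi 0) →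
      ∫ t in Ioi (0:ℝ),
          (∫ s in Ioo (0:ℝ) t, k t s * |t ^ α - s ^ α| * s ^ (-α) * f s) ^ 2
        ≤ C' * ∫ s in Ioi (0:ℝ), (f s) ^ 2 := by
  have hC : 0 ≤ C := by
    have h1 := hk0 2 1 one_pos one_lt_two
    have h2 := hk 2 1 one_pos one_lt_two
    norm_num at h2; linarith
  set a := max α 0 with ha_def
  have ha0 : 0 ≤ a := le_max_right _ _
  have ha2 : a < 1/2 := max_lt hα one_half_pos
  set c := 1/2 - a with hc_def
  have hc : 0 < c := by rw [hc_def]; linarith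
  set M := max 1 |α| with hM_def
  have hM0 : (0:ℝ) < M := lt_of_lt_of_le one_pos (le_max_left _ _)
  set B := C * M with hB_def
  have hB : 0 ≤ B := mul_nonneg hC hM0.le
  refine ⟨B^2/c^2 + 1, by positivity, ?_⟩
  intro f hf hf0 hfint
  set F : ℝ → ℝ≥0∞ := fun s => ENNReal.ofReal (f s) with hF_def
  have hFmeas : Measurable F := ENNReal.measurable_ofReal.comp hf
  set J : ℝ → ℝ≥0∞ :=
    fun t => ∫⁻ s in Ioo (0:ℝ) t, ENNReal.ofReal (B * (t ^ (a-1) * s ^ (-a)) * f s)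
    with hJ_def
  set V : ℝ → ℝ≥0∞ :=
    fun t => ∫⁻ s in Ioo (0:ℝ) t, ENNReal.ofReal (s ^ (1/2 - a)) * (F s)^2 with hV_def
  set L : ℝ≥0∞ := ∫⁻ s in Ioi (0:ℝ), (F s)^2 with hL_def
  set R : ℝ := ∫ s in Ioi (0:ℝ), (f s)^2 with hR_def
  have hR0 : 0 ≤ R := integral_nonneg fun s => sq_nonneg _
  have hLR : ENNReal.ofReal R = L := by
    rw [hR_def, hL_def,
      ofReal_integral_eq_lintegral_ofReal hfint (ae_of_all _ fun s => sq_nonneg _)]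
    exact lintegral_congr fun s => by rw [hF_def, ENNReal.ofReal_pow (hf0 s)]
  -- Step 1: bound the squared real inner integral by (J t)^2 in ℝ≥0∞
  have step1 : ∀ t ∈ Ioi (0:ℝ),
      ENNReal.ofReal ((∫ s in Ioo (0:ℝ) t,
        k t s * |t ^ α - s ^ α| * s ^ (-α) * f s) ^ 2) ≤ (J t)^2 := by
    intro t htm
    have ht : (0:ℝ) < t := htm
    set g : ℝ → ℝ := fun s => k t s * |t ^ α - s ^ α| * s ^ (-α) * f s with hg_def
    have hg0 : ∀ s ∈ Ioo (0:ℝ) t, 0 ≤ g s := by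
      intro s hsm
      exact mul_nonneg (mul_nonneg (mul_nonneg (hk0 t s hsm.1 hsm.2) (abs_nonneg _))
        (Real.rpow_nonneg hsm.1.le _)) (hf0 s)
    have hgK : ∀ s ∈ Ioo (0:ℝ) t, g s ≤ B * (t ^ (a-1) * s ^ (-a)) * f s := by
      intro s hsm
      have hts0 : (0:ℝ) < t - s := by linarith [hsm.2]
      have e1 : k t s * |t ^ α - s ^ α| * s ^ (-α)
          ≤ (C / (t-s)) * (|t ^ α - s ^ α| * s ^ (-α)) := by
        rw [mul_assoc]
        exact mul_le_mul_of_nonneg_right (hk t s hsm.1 hsm.2)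
          (mul_nonneg (abs_nonneg _) (Real.rpow_nonneg hsm.1.le _))
      have e2 : (C/(t-s)) * (|t ^ α - s ^ α| * s ^ (-α))
          ≤ (C/(t-s)) * (M * ((t-s) * (t ^ (a-1) * s ^ (-a)))) :=
        mul_le_mul_of_nonneg_left (kernel_pointwise hα hsm.1 hsm.2)
          (div_nonneg hC hts0.le)
      have e3 : (C/(t-s)) * (M * ((t-s) * (t ^ (a-1) * s ^ (-a))))
          = B * (t ^ (a-1) * s ^ (-a)) := by
        rw [hB_def]; field_simp
      exact mul_le_mul_of_nonneg_right (by rw [← e3]; exact le_trans e1 e2) (hf0 s)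
    set I : ℝ≥0∞ := ∫⁻ s in Ioo (0:ℝ) t, ENNReal.ofReal (g s) with hI_def
    have hIJ : I ≤ J t := by
      apply lintegral_mono_ae
      filter_upwards [ae_restrict_mem measurableSet_Ioo] with s hsm
      exact ENNReal.ofReal_le_ofReal (hgK s hsm)
    have hint_nonneg : 0 ≤ ∫ s in Ioo (0:ℝ) t, g s :=
      setIntegral_nonneg measurableSet_Ioo hg0
    have hle : ∫ s in Ioo (0:ℝ) t, g s ≤ I.toReal := by
      by_cases hm : AEStronglyMeasurable g (volume.restrict (Ioo (0:ℝ) t))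
      · rw [integral_eq_lintegral_of_nonneg_ae
          ((ae_restrict_iff' measurableSet_Ioo).2 (ae_of_all _ hg0)) hm]
      · rw [integral_non_aestronglyMeasurable hm]; exact ENNReal.toReal_nonneg
    rcases eq_or_ne (J t) ⊤ with hJt | hJt
    · rw [hJt, ENNReal.top_pow (by norm_num)]; exact le_top
    · have hle2 : ∫ s in Ioo (0:ℝ) t, g s ≤ (J t).toReal :=
        le_trans hle (ENNReal.toReal_mono hJt hIJ)
      calc ENNReal.ofReal ((∫ s in Ioo (0:ℝ) t, g s)^2)
          ≤ ENNReal.ofReal ((J t).toReal ^ 2) :=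
            ENNReal.ofReal_le_ofReal (pow_le_pow_left₀ hint_nonneg hle2 2)
        _ = (ENNReal.ofReal ((J t).toReal))^2 :=
            ENNReal.ofReal_pow ENNReal.toReal_nonneg 2
        _ = (J t)^2 := by rw [ENNReal.ofReal_toReal hJt]
  -- Step 2: Cauchy-Schwarz
  have step2 : ∀ t ∈ Ioi (0:ℝ), (J t)^2 ≤
      ENNReal.ofReal (B^2/c) * (ENNReal.ofReal (t ^ (a - 3/2)) * V t) := by
    intro t htm
    have ht : (0:ℝ) < t := htm
    set P : ℝ≥0∞ := ∫⁻ s in Ioo (0:ℝ) t, ENNReal.ofReal (s ^ (-a)) * F s with hP_def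
    have hJfact : J t = ENNReal.ofReal B * (ENNReal.ofReal (t ^ (a-1)) * P) := by
      rw [hJ_def, hP_def]
      calc ∫⁻ s in Ioo (0:ℝ) t, ENNReal.ofReal (B * (t ^ (a-1) * s ^ (-a)) * f s)
          = ∫⁻ s in Ioo (0:ℝ) t, ENNReal.ofReal B *
            (ENNReal.ofReal (t ^ (a-1)) * (ENNReal.ofReal (s ^ (-a)) * F s)) := by
            apply lintegral_congr_ae
            filter_upwards [ae_restrict_mem measurableSet_Ioo] with s hsm
            rw [show B * (t ^ (a-1) * s ^ (-a)) * f s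
              = B * ((t ^ (a-1)) * ((s ^ (-a)) * f s)) by ring]
            rw [ENNReal.ofReal_mul hB, ENNReal.ofReal_mul (Real.rpow_nonneg ht.le _),
              ENNReal.ofReal_mul (Real.rpow_nonneg hsm.1.le _)]
        _ = ENNReal.ofReal B * (ENNReal.ofReal (t ^ (a-1)) *
            ∫⁻ s in Ioo (0:ℝ) t, ENNReal.ofReal (s ^ (-a)) * F s) := by
            rw [lintegral_const_mul' _ _ ENNReal.ofReal_ne_top,
              lintegral_const_mul' _ _ ENNReal.ofReal_ne_top]
    have hCS : P ≤ (∫⁻ s in Ioo (0:ℝ) t, ENNReal.ofReal (s ^ (-a - 1/2))) ^ ((1:ℝ)/2)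
        * (V t) ^ ((1:ℝ)/2) := by
      have h22 : Real.HolderConjugate 2 2 := Real.holderConjugate_iff.mpr ⟨one_lt_two, by norm_num⟩
      have hφ : AEMeasurable (fun s : ℝ => ENNReal.ofReal (s ^ (-a/2 - 1/4)))
          (volume.restrict (Ioo 0 t)) :=
        (ENNReal.measurable_ofReal.comp (measurable_id.pow measurable_const)).aemeasurable
      have hψ : AEMeasurable (fun s : ℝ => ENNReal.ofReal (s ^ (-a/2 + 1/4)) * F s)
          (volume.restrict (Ioo 0 t)) :=
        ((ENNReal.measurable_ofReal.comp (measurable_id.pow measurable_const)).mul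
          hFmeas).aemeasurable
      have key := ENNReal.lintegral_mul_le_Lp_mul_Lq (volume.restrict (Ioo (0:ℝ) t))
        h22 hφ hψ
      have hLHSeq : (∫⁻ s in Ioo (0:ℝ) t, ((fun s : ℝ => ENNReal.ofReal (s ^ (-a/2 - 1/4)))
          * fun s : ℝ => ENNReal.ofReal (s ^ (-a/2 + 1/4)) * F s) s) = P := by
        rw [hP_def]
        apply lintegral_congr_ae
        filter_upwards [ae_restrict_mem measurableSet_Ioo] with s hsm
        simp only [Pi.mul_apply]
        rw [← mul_assoc, ← ENNReal.ofReal_mul (Real.rpow_nonneg hsm.1.le _),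
          ← Real.rpow_add hsm.1]
        norm_num
      have hf2 : ∫⁻ s in Ioo (0:ℝ) t, (ENNReal.ofReal (s ^ (-a/2 - 1/4))) ^ (2:ℝ)
          = ∫⁻ s in Ioo (0:ℝ) t, ENNReal.ofReal (s ^ (-a - 1/2)) := by
        apply lintegral_congr_ae
        filter_upwards [ae_restrict_mem measurableSet_Ioo] with s hsm
        rw [ENNReal.ofReal_rpow_of_nonneg (Real.rpow_nonneg hsm.1.le _) (by norm_num),
          ← Real.rpow_mul hsm.1.le]
        congr 2
        ring
      have hg2 : ∫⁻ s in Ioo (0:ℝ) t, (ENNReal.ofReal (s ^ (-a/2 + 1/4)) * F s) ^ (2:ℝ)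
          = V t := by
        rw [hV_def]
        apply lintegral_congr_ae
        filter_upwards [ae_restrict_mem measurableSet_Ioo] with s hsm
        rw [ENNReal.mul_rpow_of_nonneg _ _ (by norm_num : (0:ℝ) ≤ 2),
          ENNReal.ofReal_rpow_of_nonneg (Real.rpow_nonneg hsm.1.le _) (by norm_num),
          ← Real.rpow_mul hsm.1.le,
          show (-a/2 + 1/4) * 2 = 1/2 - a by ring,
          show (2:ℝ) = ((2:ℕ):ℝ) by norm_num, ENNReal.rpow_natCast]
      rw [hLHSeq, hf2, hg2] at key
      simpa using key
    have hbd : (∫⁻ s in Ioo (0:ℝ) t, ENNReal.ofReal (s ^ (-a - 1/2)))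
        = ENNReal.ofReal (t ^ c / c) := by
      rw [lint_Ioo (by linarith) ht, show (-a - 1/2) + 1 = c by rw [hc_def]; ring]
    have sq_half : ∀ X : ℝ≥0∞, (X ^ ((1:ℝ)/2)) * (X ^ ((1:ℝ)/2)) = X := by
      intro X
      rw [← ENNReal.rpow_add_of_nonneg _ _ (by norm_num) (by norm_num)]
      norm_num
    have hPV : P ^ 2 ≤ ENNReal.ofReal (t ^ c / c) * V t := by
      rw [hbd] at hCS
      calc P ^ 2 = P * P := sq P
        _ ≤ ((ENNReal.ofReal (t ^ c / c)) ^ ((1:ℝ)/2) * (V t) ^ ((1:ℝ)/2))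
            * ((ENNReal.ofReal (t ^ c / c)) ^ ((1:ℝ)/2) * (V t) ^ ((1:ℝ)/2)) :=
            mul_le_mul' hCS hCS
        _ = ((ENNReal.ofReal (t ^ c / c)) ^ ((1:ℝ)/2) * (ENNReal.ofReal (t ^ c / c)) ^ ((1:ℝ)/2))
            * ((V t) ^ ((1:ℝ)/2) * (V t) ^ ((1:ℝ)/2)) := by ring
        _ = ENNReal.ofReal (t ^ c / c) * V t := by rw [sq_half, sq_half]
    have h1 : (t ^ (a-1)) ^ 2 = t ^ (2*a - 2) := by
      rw [← Real.rpow_natCast (t ^ (a-1)) 2, ← Real.rpow_mul ht.le]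
      congr 1
      push_cast
      ring
    have h2 : t ^ (2*a - 2) * t ^ c = t ^ (a - 3/2) := by
      rw [← Real.rpow_add ht]
      congr 1
      rw [hc_def]; ring
    have hreal : B ^ 2 * (t ^ (a-1)) ^ 2 * (t ^ c / c) = B^2/c * t ^ (a - 3/2) := by
      rw [h1, show B^2 * t^(2*a-2) * (t^c/c) = B^2/c * (t^(2*a-2) * t^c) by ring, h2]
    have hconst : ENNReal.ofReal B ^ 2 * (ENNReal.ofReal (t ^ (a-1)) ^ 2 *
        (ENNReal.ofReal (t ^ c / c) * V t))
        = ENNReal.ofReal (B^2/c) * (ENNReal.ofReal (t ^ (a - 3/2)) * V t) := by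
      rw [← ENNReal.ofReal_pow hB, ← ENNReal.ofReal_pow (Real.rpow_nonneg ht.le _),
        ← mul_assoc, ← mul_assoc,
        ← ENNReal.ofReal_mul (sq_nonneg B),
        ← ENNReal.ofReal_mul (by positivity : (0:ℝ) ≤ B^2 * (t ^ (a-1))^2),
        hreal,
        ENNReal.ofReal_mul (by positivity : (0:ℝ) ≤ B^2/c), mul_assoc]
    calc (J t)^2 = ENNReal.ofReal B ^ 2 * (ENNReal.ofReal (t ^ (a-1)) ^ 2 * P ^ 2) := by
          rw [hJfact]; ring
      _ ≤ ENNReal.ofReal B ^ 2 * (ENNReal.ofReal (t ^ (a-1)) ^ 2 *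
          (ENNReal.ofReal (t ^ c / c) * V t)) := by
          exact mul_le_mul_right (mul_le_mul_right hPV _) _
      _ = ENNReal.ofReal (B^2/c) * (ENNReal.ofReal (t ^ (a - 3/2)) * V t) := hconst
  -- Tonelli
  set H : ℝ → ℝ → ℝ≥0∞ := fun t s =>
    ENNReal.ofReal (t ^ (a - 3/2)) * (ENNReal.ofReal (s ^ (1/2 - a)) * (F s)^2) with hH_def
  set G : ℝ → ℝ → ℝ≥0∞ := fun t s => if s < t then H t s else 0 with hG_def
  have hGmeas : Measurable (Function.uncurry G) := by
    have : Function.uncurry G = fun p : ℝ × ℝ => if p.2 < p.1 then H p.1 p.2 else 0 := rfl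
    rw [this]
    apply Measurable.ite
    · exact measurableSet_lt measurable_snd measurable_fst
    · refine Measurable.mul (f := fun p : ℝ × ℝ => ENNReal.ofReal (p.1 ^ (a - 3/2)))
        (g := fun p : ℝ × ℝ => ENNReal.ofReal (p.2 ^ (1/2 - a)) * (F p.2)^2) ?_ ?_
      · exact ENNReal.measurable_ofReal.comp (measurable_fst.pow measurable_const)
      · exact (ENNReal.measurable_ofReal.comp (measurable_snd.pow measurable_const)).mul
          ((hFmeas.comp measurable_snd).pow_const 2)
    · exact measurable_const
  have h4a : ∀ t ∈ Ioi (0:ℝ),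
      ENNReal.ofReal (t ^ (a - 3/2)) * V t = ∫⁻ s in Ioi (0:ℝ), G t s := by
    intro t htm
    calc ENNReal.ofReal (t ^ (a - 3/2)) * V t
        = ∫⁻ s in Ioo (0:ℝ) t, H t s := by
          rw [hV_def, hH_def, lintegral_const_mul' _ _ ENNReal.ofReal_ne_top]
      _ = ∫⁻ s in Iio t ∩ Ioi (0:ℝ), H t s := by
          rw [show Iio t ∩ Ioi (0:ℝ) = Ioo (0:ℝ) t by rw [inter_comm, Ioi_inter_Iio]]
      _ = ∫⁻ s in Ioi (0:ℝ), (Iio t).indicator (H t) s := by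
          rw [lintegral_indicator measurableSet_Iio, Measure.restrict_restrict measurableSet_Iio]
      _ = ∫⁻ s in Ioi (0:ℝ), G t s := by
          apply lintegral_congr
          intro s
          rw [hG_def]
          simp [indicator_apply]
  have h4c : ∀ s ∈ Ioi (0:ℝ),
      (∫⁻ t in Ioi (0:ℝ), G t s) = ENNReal.ofReal (1/c) * (F s)^2 := by
    intro s hsm
    have hs : (0:ℝ) < s := hsm
    have hfin : ENNReal.ofReal (s ^ (1/2 - a)) * (F s)^2 ≠ ⊤ :=
      ENNReal.mul_ne_top ENNReal.ofReal_ne_top (by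
        rw [hF_def]; exact ENNReal.pow_ne_top ENNReal.ofReal_ne_top)
    calc ∫⁻ t in Ioi (0:ℝ), G t s
        = ∫⁻ t in Ioi (0:ℝ), (Ioi s).indicator (fun t => H t s) t := by
          apply lintegral_congr
          intro u
          rw [hG_def]
          simp [indicator_apply]
      _ = ∫⁻ t in Ioi s ∩ Ioi (0:ℝ), H t s := by
          rw [lintegral_indicator measurableSet_Ioi, Measure.restrict_restrict measurableSet_Ioi]
      _ = ∫⁻ t in Ioi s, H t s := by
          rw [inter_eq_left.2 (Ioi_subset_Ioi hs.le)]
      _ = (∫⁻ t in Ioi s, ENNReal.ofReal (t ^ (a - 3/2)))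
            * (ENNReal.ofReal (s ^ (1/2 - a)) * (F s)^2) := by
          rw [hH_def, lintegral_mul_const' _ _ hfin]
      _ = ENNReal.ofReal (s ^ (a - 1/2) / c)
            * (ENNReal.ofReal (s ^ (1/2 - a)) * (F s)^2) := by
          rw [lint_Ioi (by linarith) hs]
          congr 1
          rw [show (a - 3/2) + 1 = a - 1/2 by ring, neg_div, ← div_neg]
          congr 1
          rw [hc_def]; ring
      _ = ENNReal.ofReal (1/c) * (F s)^2 := by
          rw [← mul_assoc, ← ENNReal.ofReal_mul (by positivity)]
          congr 2
          rw [div_mul_eq_mul_div, ← Real.rpow_add hs,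
            show (a - 1/2) + (1/2 - a) = 0 by ring, Real.rpow_zero]
  have hswap : ∫⁻ t in Ioi (0:ℝ), ∫⁻ s in Ioi (0:ℝ), G t s
      = ∫⁻ s in Ioi (0:ℝ), ∫⁻ t in Ioi (0:ℝ), G t s :=
    lintegral_lintegral_swap hGmeas.aemeasurable
  -- final assembly
  by_cases hInt : Integrable (fun t =>
      (∫ s in Ioo (0:ℝ) t, k t s * |t ^ α - s ^ α| * s ^ (-α) * f s)^2)
      (volume.restrict (Ioi 0))
  · rw [integral_eq_lintegral_of_nonneg_ae (ae_of_all _ fun t => sq_nonneg _) hInt.1]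
    apply ENNReal.toReal_le_of_le_ofReal (mul_nonneg (by positivity) hR0)
    calc ∫⁻ t in Ioi (0:ℝ), ENNReal.ofReal
          ((∫ s in Ioo (0:ℝ) t, k t s * |t ^ α - s ^ α| * s ^ (-α) * f s)^2)
        ≤ ∫⁻ t in Ioi (0:ℝ), (J t)^2 :=
          lintegral_mono_ae ((ae_restrict_iff' measurableSet_Ioi).2 (ae_of_all _ step1))
      _ ≤ ∫⁻ t in Ioi (0:ℝ), ENNReal.ofReal (B^2/c) *
            (ENNReal.ofReal (t ^ (a - 3/2)) * V t) :=
          lintegral_mono_ae ((ae_restrict_iff' measurableSet_Ioi).2 (ae_of_all _ step2))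
      _ = ENNReal.ofReal (B^2/c) *
            ∫⁻ t in Ioi (0:ℝ), ENNReal.ofReal (t ^ (a - 3/2)) * V t :=
          lintegral_const_mul' _ _ ENNReal.ofReal_ne_top
      _ = ENNReal.ofReal (B^2/c) * ∫⁻ t in Ioi (0:ℝ), ∫⁻ s in Ioi (0:ℝ), G t s := by
          rw [lintegral_congr_ae ((ae_restrict_iff' measurableSet_Ioi).2 (ae_of_all _ h4a))]
      _ = ENNReal.ofReal (B^2/c) * ∫⁻ s in Ioi (0:ℝ), ∫⁻ t in Ioi (0:ℝ), G t s := by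
          rw [hswap]
      _ = ENNReal.ofReal (B^2/c) * ∫⁻ s in Ioi (0:ℝ), ENNReal.ofReal (1/c) * (F s)^2 := by
          rw [lintegral_congr_ae ((ae_restrict_iff' measurableSet_Ioi).2 (ae_of_all _ h4c))]
      _ = ENNReal.ofReal (B^2/c) * (ENNReal.ofReal (1/c) * L) := by
          rw [hL_def, lintegral_const_mul' _ _ ENNReal.ofReal_ne_top]
      _ = ENNReal.ofReal (B^2/c) * (ENNReal.ofReal (1/c) * ENNReal.ofReal R) := by
          rw [hLR]
      _ ≤ ENNReal.ofReal ((B^2/c^2 + 1) * R) := by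
          rw [← ENNReal.ofReal_mul (by positivity), ← ENNReal.ofReal_mul (by positivity)]
          apply ENNReal.ofReal_le_ofReal
          rw [show B^2/c * (1/c * R) = B^2/c^2 * R by rw [← mul_assoc, div_mul_div_comm, mul_one, ← pow_two]]
          nlinarith [hR0, sq_nonneg B]
  · rw [integral_undef hInt]
    exact mul_nonneg (by positivity) hR0
end

section
/- Let m be a positive integer, β a real number and 0 < p < ∞. The map j defined by j(f)(t,y) = √m · t^{m(1+β)/2} f(t^m, y) is an isometry from T^{p,2,m}(t^β dt dy) onto T^{p,2,1}(t^{−1} dt dy); in particular ‖j(f)‖_{T^{p,2,1}(t^{-1}dtdy)} = ‖f‖_{T^{p,2,m}(t^β dtdy)} for all f. -/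
open MeasureTheory Set

/-- The tent space quasi-norm `‖g‖_{T^{p,2,m}(t^β dt dy)}` (valued in `ℝ≥0∞`). -/
noncomputable def tentNorm (n : ℕ) (p : ℝ) (m : ℕ) (β : ℝ)
    (g : ℝ → EuclideanSpace ℝ (Fin n) → ℝ) : ENNReal :=
  (∫⁻ x : EuclideanSpace ℝ (Fin n),
      (∫⁻ t in Ioi (0:ℝ), ∫⁻ y : EuclideanSpace ℝ (Fin n),
        (Metric.ball x (t ^ (1 / (m:ℝ)))).indicator
          (fun y => ENNReal.ofReal (t ^ (-(n:ℝ) / (m:ℝ)) * (g t y) ^ 2 * t ^ β)) y)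
        ^ (p / 2)) ^ (1 / p)

/-- One-dimensional change of variables for the Lebesgue (lower) integral. -/
theorem lintegral_image_eq_lintegral_abs_deriv_mul' {s : Set ℝ} {f f' : ℝ → ℝ}
    (hs : MeasurableSet s) (hf' : ∀ x ∈ s, HasDerivWithinAt f (f' x) s x)
    (hf : Set.InjOn f s) (g : ℝ → ENNReal) :
    ∫⁻ x in f '' s, g x = ∫⁻ x in s, ENNReal.ofReal |f' x| * g (f x) := by
  simpa only [ContinuousLinearMap.det_toSpanSingleton] using
    lintegral_image_eq_lintegral_abs_det_fderiv_mul volume hs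
      (fun x hx => (hf' x hx).hasFDerivWithinAt) hf g

/-- The map `j(f)(t,y) = √m · t^{m(1+β)/2} f(t^m, y)` is an isometry from
`T^{p,2,m}(t^β dt dy)` onto `T^{p,2,1}(t^{−1} dt dy)`. -/
theorem stmt_4 (n : ℕ) (m : ℕ) (hm : 0 < m) (β p : ℝ) (hp : 0 < p)
    (f : ℝ → EuclideanSpace ℝ (Fin n) → ℝ)
    (hf : Measurable (Function.uncurry f)) :
    tentNorm n p 1 (-1)
        (fun t y => Real.sqrt m * t ^ ((m * (1 + β)) / 2) * f (t ^ (m:ℕ)) y)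
      = tentNorm n p m β f := by
  have hm' : (m:ℝ) ≠ 0 := Nat.cast_ne_zero.mpr hm.ne'
  unfold tentNorm
  congr 1
  apply lintegral_congr
  intro x
  congr 1
  -- change of variables t = s^m on the RHS
  have himg : (fun s : ℝ => s ^ m) '' Ioi 0 = Ioi 0 := by
    ext t
    constructor
    · rintro ⟨s, hs, rfl⟩
      exact pow_pos (mem_Ioi.mp hs) m
    · intro ht
      refine ⟨t ^ ((m:ℝ)⁻¹), Real.rpow_pos_of_pos ht _, ?_⟩
      show (t ^ ((m:ℝ)⁻¹)) ^ m = t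
      rw [← Real.rpow_natCast (t ^ ((m:ℝ)⁻¹)) m, ← Real.rpow_mul (le_of_lt ht),
        inv_mul_cancel₀ hm', Real.rpow_one]
  have hderiv : ∀ s ∈ Ioi (0:ℝ),
      HasDerivWithinAt (fun s : ℝ => s ^ m) ((m:ℝ) * s ^ (m - 1)) (Ioi 0) s :=
    fun s _ => (hasDerivAt_pow m s).hasDerivWithinAt
  have hinj : Set.InjOn (fun s : ℝ => s ^ m) (Ioi 0) :=
    (pow_left_strictMonoOn₀ hm.ne').injOn.mono (fun s hs => le_of_lt hs)
  have hcov := lintegral_image_eq_lintegral_abs_deriv_mul' measurableSet_Ioi hderiv hinj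
    (fun t => ∫⁻ y : EuclideanSpace ℝ (Fin n),
        (Metric.ball x (t ^ (1 / (m:ℝ)))).indicator
          (fun y => ENNReal.ofReal (t ^ (-(n:ℝ) / (m:ℝ)) * (f t y) ^ 2 * t ^ β)) y)
  rw [himg] at hcov
  rw [hcov]
  apply setLIntegral_congr_fun measurableSet_Ioi
  intro s hs
  beta_reduce
  have hs0 : (0:ℝ) < s := hs
  have hsm : (0:ℝ) < s ^ m := pow_pos hs0 m
  -- simplify (s^m)^(1/m) = s
  have hrad : ((s ^ m : ℝ)) ^ (1 / (m:ℝ)) = s := by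
    rw [← Real.rpow_natCast s m, ← Real.rpow_mul hs0.le, mul_one_div, div_self hm',
      Real.rpow_one]
  rw [hrad]
  rw [← lintegral_const_mul' _ _ ENNReal.ofReal_ne_top]
  simp only [Nat.cast_one]
  apply lintegral_congr
  intro y
  by_cases hy : y ∈ Metric.ball x (s ^ (1 / (1:ℝ)))
  · have hy' : y ∈ Metric.ball x s := by
      rwa [show (1:ℝ)/(1:ℝ) = 1 by norm_num, Real.rpow_one] at hy
    rw [Set.indicator_of_mem hy, Set.indicator_of_mem hy',
      ← ENNReal.ofReal_mul (abs_nonneg _)]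
    congr 1
    have h1 : |(m:ℝ) * s ^ (m - 1)| = (m:ℝ) * s ^ (m - 1) := by
      apply abs_of_nonneg
      positivity
    rw [h1]
    -- express everything via rpow with base s
    have e1 : ((s ^ m : ℝ)) ^ (-(n:ℝ) / (m:ℝ)) = s ^ (-(n:ℝ)) := by
      rw [← Real.rpow_natCast s m, ← Real.rpow_mul hs0.le]
      congr 1
      field_simp
    have e2 : ((s ^ m : ℝ)) ^ β = s ^ ((m:ℝ) * β) := by
      rw [← Real.rpow_natCast s m, ← Real.rpow_mul hs0.le]
    have e3 : (s ^ (m - 1) : ℝ) = s ^ (((m:ℝ) - 1)) := by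
      rw [← Real.rpow_natCast s (m - 1)]
      congr 1
      push_cast [Nat.cast_sub hm]
      ring
    have e4 : (s ^ (((m:ℝ) * (1 + β)) / 2)) ^ 2 = s ^ ((m:ℝ) * (1 + β)) := by
      rw [← Real.rpow_natCast (s ^ (((m:ℝ) * (1 + β)) / 2)) 2, ← Real.rpow_mul hs0.le]
      norm_num
    have hsq : (Real.sqrt m) ^ 2 = (m:ℝ) := Real.sq_sqrt (Nat.cast_nonneg m)
    rw [e1, e2, e3]
    rw [mul_pow, mul_pow, hsq, e4]
    have hone : (1:ℝ)/(1:ℝ) = 1 := by norm_num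
    rw [show -(n:ℝ) / (1:ℝ) = -(n:ℝ) by norm_num, show ((-1:ℝ)) = -(1:ℝ) by norm_num]
    have key : s ^ (-(n:ℝ)) * s ^ ((m:ℝ)*(1+β)) * s ^ (-1:ℝ)
        = s ^ ((m:ℝ)-1) * (s ^ (-(n:ℝ)) * s ^ ((m:ℝ)*β)) := by
      rw [← Real.rpow_add hs0, ← Real.rpow_add hs0, ← Real.rpow_add hs0, ← Real.rpow_add hs0]
      congr 1
      ring
    calc s ^ (-(n:ℝ)) * ((m:ℝ) * s ^ ((m:ℝ)*(1+β)) * f (s ^ m) y ^ 2) * s ^ (-1:ℝ)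
        = (m:ℝ) * f (s ^ m) y ^ 2 * (s ^ (-(n:ℝ)) * s ^ ((m:ℝ)*(1+β)) * s ^ (-1:ℝ)) := by ring
      _ = (m:ℝ) * f (s ^ m) y ^ 2 * (s ^ ((m:ℝ)-1) * (s ^ (-(n:ℝ)) * s ^ ((m:ℝ)*β))) := by
          rw [key]
      _ = _ := by ring
  · have hy' : y ∉ Metric.ball x s := by
      rwa [show (1:ℝ)/(1:ℝ) = 1 by norm_num, Real.rpow_one] at hy
    rw [Set.indicator_of_notMem hy, Set.indicator_of_notMem hy', mul_zero]
end

section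
/- Let ν ∈ (0, π/2), z ∈ ℂ with |arg z| ≤ ν, Re z > 0, and α ∈ ℂ with Re α = a > 0. Then the operator M_z on L²((0,∞), dt; ℂ) defined by M_z f(t) = ∫₀^t (t−s)^{α−1} z^α e^{−(t−s)z} f(s) ds is bounded with operator norm at most Γ(a) e^{ν |Im α|} (cos ν)^{−a}. -/
open MeasureTheory Set Real

lemma ofReal_norm_eq_coe_nnnorm {E : Type*} [SeminormedAddCommGroup E] (x : E) :
    ENNReal.ofReal ‖x‖ = (‖x‖₊ : ENNReal) :=
  ENNReal.ofReal_eq_coe_nnreal _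

lemma my_measurable_cpow_const (w : ℂ) : Measurable fun x : ℂ => x ^ w := by
  have h : (fun x : ℂ => x ^ w)
      = fun x => if x = 0 then (if w = 0 then 1 else 0) else Complex.exp (Complex.log x * w) := by
    funext x; rw [Complex.cpow_def]
  rw [h]
  exact Measurable.ite (measurableSet_eq) measurable_const
    ((Complex.measurable_log.mul_const w).cexp)

lemma my_kernel_bound (ν : ℝ) (hν : ν ∈ Ioo 0 (π / 2)) (z : ℂ)
    (hz : |z.arg| ≤ ν) (hre : 0 < z.re) (α : ℂ) (ha : 0 < α.re) :
    ∫⁻ u in Ioi (0:ℝ), (‖(u:ℂ) ^ (α - 1) * z ^ α * Complex.exp (-(u:ℂ) * z)‖₊ : ENNReal)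
      ≤ ENNReal.ofReal (Real.Gamma α.re * Real.exp (ν * |α.im|) / Real.cos ν ^ α.re) := by
  have hzne : z ≠ 0 := by
    intro h; rw [h] at hre; simp at hre
  have habs : 0 < ‖z‖ := norm_pos_iff.mpr hzne
  have hcν : 0 < Real.cos ν := Real.cos_pos_of_mem_Ioo ⟨by linarith [hν.1, Real.pi_pos], hν.2⟩
  set a := α.re with ha'
  set r := z.re with hr'
  -- bound on ‖z ^ α‖
  have hB : ‖z ^ α‖ ≤ ‖z‖ ^ a * Real.exp (ν * |α.im|) := by
    rw [Complex.norm_cpow_of_ne_zero hzne, div_le_iff₀ (Real.exp_pos _)]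
    have h1 : (1:ℝ) ≤ Real.exp (ν * |α.im|) * Real.exp (z.arg * α.im) := by
      rw [← Real.exp_add]
      apply Real.one_le_exp
      have h2 : |z.arg * α.im| ≤ ν * |α.im| := by
        rw [abs_mul]
        exact mul_le_mul_of_nonneg_right hz (abs_nonneg _)
      have := neg_abs_le (z.arg * α.im)
      linarith
    have h3 : 0 ≤ ‖z‖ ^ a := Real.rpow_nonneg habs.le _
    nlinarith
  -- pointwise norm identity
  have hpt : ∀ u : ℝ, 0 < u →
      ‖(u:ℂ) ^ (α - 1) * z ^ α * Complex.exp (-(u:ℂ) * z)‖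
        = ‖z ^ α‖ * (u ^ (a - 1) * Real.exp (-(r * u))) := by
    intro u hu
    rw [norm_mul, norm_mul]
    rw [Complex.norm_cpow_eq_rpow_re_of_pos hu]
    rw [Complex.norm_exp]
    have : (-(u:ℂ) * z).re = -(r * u) := by
      simp [Complex.neg_re, Complex.mul_re, mul_comm, hr']
    rw [this, Complex.sub_re, Complex.one_re]
    ring
  -- integrability of the model function
  have hint : IntegrableOn (fun u : ℝ => u ^ (a - 1) * Real.exp (-(r * u))) (Ioi 0) := by
    have h0 := Real.GammaIntegral_convergent ha
    rw [show (0:ℝ) = r * 0 by ring, ← integrableOn_Ioi_comp_mul_left_iff _ _ hre] at h0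
    refine IntegrableOn.congr_fun (h0.const_mul ((r ^ (a - 1))⁻¹)) (fun u hu => ?_) measurableSet_Ioi
    have hu : 0 < u := hu
    rw [Real.mul_rpow hre.le hu.le]
    have h1 : r ^ (a-1) ≠ 0 := (Real.rpow_pos_of_pos hre _).ne'
    field_simp
  have hGamma := integral_rpow_mul_exp_neg_mul_Ioi ha hre
  -- rewrite the lintegral
  have hstep : ∫⁻ u in Ioi (0:ℝ), (‖(u:ℂ) ^ (α - 1) * z ^ α * Complex.exp (-(u:ℂ) * z)‖₊ : ENNReal)
      = ENNReal.ofReal ‖z ^ α‖ *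
        ∫⁻ u in Ioi (0:ℝ), ENNReal.ofReal (u ^ (a - 1) * Real.exp (-(r * u))) := by
    rw [← lintegral_const_mul' _ _ ENNReal.ofReal_ne_top]
    refine setLIntegral_congr_fun measurableSet_Ioi (fun u hu => ?_)
    rw [← ofReal_norm_eq_coe_nnnorm, hpt u hu, ENNReal.ofReal_mul (norm_nonneg _)]
  rw [hstep]
  have hlin : ∫⁻ u in Ioi (0:ℝ), ENNReal.ofReal (u ^ (a - 1) * Real.exp (-(r * u)))
      = ENNReal.ofReal ((1 / r) ^ a * Real.Gamma a) := by
    rw [← hGamma]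
    rw [← ofReal_integral_eq_lintegral_ofReal hint]
    refine (ae_restrict_iff' measurableSet_Ioi).2 (ae_of_all _ fun u hu => ?_)
    have hu : (0:ℝ) < u := hu
    positivity
  rw [hlin, ← ENNReal.ofReal_mul (norm_nonneg _)]
  apply ENNReal.ofReal_le_ofReal
  -- final arithmetic
  have hE : 0 < Real.exp (ν * |α.im|) := Real.exp_pos _
  have hΓ : 0 < Real.Gamma a := Real.Gamma_pos_of_pos ha
  have hcarg : Real.cos z.arg * ‖z‖ = r := by
    rw [Complex.cos_arg hzne]; field_simp; exact hr'.symm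
  have hc2 : Real.cos ν ≤ Real.cos z.arg := by
    rw [← Real.cos_abs z.arg]
    exact Real.cos_le_cos_of_nonneg_of_le_pi (abs_nonneg _)
      (by linarith [hν.2, Real.pi_pos]) hz
  have hkey : Real.cos ν * ‖z‖ ≤ r := by
    nlinarith [mul_le_mul_of_nonneg_right hc2 habs.le]
  have hdiv : ‖z‖ / r ≤ (Real.cos ν)⁻¹ := by
    rw [div_le_iff₀ hre]
    nlinarith [mul_le_mul_of_nonneg_left hkey (inv_nonneg.2 hcν.le),
      inv_mul_cancel₀ hcν.ne']
  have hrpow : (‖z‖ / r) ^ a ≤ ((Real.cos ν)⁻¹) ^ a :=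
    Real.rpow_le_rpow (by positivity) hdiv ha.le
  calc ‖z ^ α‖ * ((1 / r) ^ a * Real.Gamma a)
      ≤ (‖z‖ ^ a * Real.exp (ν * |α.im|)) * ((1 / r) ^ a * Real.Gamma a) := by
        apply mul_le_mul_of_nonneg_right hB
        have : (0:ℝ) ≤ (1 / r) ^ a := Real.rpow_nonneg (by positivity) _
        positivity
    _ = (Real.Gamma a * Real.exp (ν * |α.im|)) * (‖z‖ / r) ^ a := by
        have hm : ‖z‖ ^ a * (1 / r) ^ a = (‖z‖ / r) ^ a := by
          rw [← Real.mul_rpow habs.le (by positivity), mul_one_div]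
        rw [← hm]; ring
    _ ≤ (Real.Gamma a * Real.exp (ν * |α.im|)) * ((Real.cos ν)⁻¹) ^ a := by
        apply mul_le_mul_of_nonneg_left hrpow (by positivity)
    _ = Real.Gamma a * Real.exp (ν * |α.im|) / Real.cos ν ^ a := by
        rw [Real.inv_rpow hcν.le]
        ring

/-- The operator `M_z f(t) = ∫₀^t (t−s)^{α−1} z^α e^{−(t−s)z} f(s) ds` is
bounded on `L²((0,∞), dt; ℂ)` with norm at most `Γ(Re α) e^{ν|Im α|} (cos ν)^{−Re α}`. -/
theorem stmt_8 (ν : ℝ) (hν : ν ∈ Ioo 0 (π / 2)) (z : ℂ)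
    (hz : |z.arg| ≤ ν) (hre : 0 < z.re) (α : ℂ) (ha : 0 < α.re) :
    ∀ f : ℝ → ℂ, Measurable f →
      IntegrableOn (fun s => ‖f s‖ ^ 2) (Ioi 0) →
      ∫ t in Ioi (0:ℝ),
          ‖∫ s in Ioc (0:ℝ) t,
              ((t : ℂ) - s) ^ (α - 1) * z ^ α * Complex.exp (-((t : ℂ) - s) * z) * f s‖ ^ 2
        ≤ (Real.Gamma α.re * Real.exp (ν * |α.im|) / Real.cos ν ^ α.re) ^ 2 *
            ∫ s in Ioi (0:ℝ), ‖f s‖ ^ 2 := by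
  intro f hf hfi
  obtain ⟨hν1, hν2⟩ := hν
  set C : ℝ := Real.Gamma α.re * Real.exp (ν * |α.im|) / Real.cos ν ^ α.re with hCdef
  have hcν : 0 < Real.cos ν := Real.cos_pos_of_mem_Ioo ⟨by linarith [Real.pi_pos], hν2⟩
  have hC0 : 0 ≤ C := le_of_lt (div_pos (mul_pos (Real.Gamma_pos_of_pos ha)
    (Real.exp_pos _)) (Real.rpow_pos_of_pos hcν _))
  set g : ℝ → ℂ := fun u => (u:ℂ) ^ (α - 1) * z ^ α * Complex.exp (-(u:ℂ) * z) with hgdef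
  have hgm : Measurable g :=
    (((my_measurable_cpow_const (α - 1)).comp Complex.measurable_ofReal).mul
      measurable_const).mul ((Complex.measurable_ofReal.neg.mul_const z).cexp)
  have key : ∫⁻ u in Ioi (0:ℝ), (‖g u‖₊ : ENNReal) ≤ ENNReal.ofReal C :=
    my_kernel_bound ν ⟨hν1, hν2⟩ z hz hre α ha
  set G : ℝ → ENNReal := (Ioi (0:ℝ)).indicator (fun u => (‖g u‖₊ : ENNReal)) with hGdef
  have hGm : Measurable G := (hgm.nnnorm.coe_nnreal_ennreal).indicator measurableSet_Ioi
  have keyG : ∫⁻ u, G u ≤ ENNReal.ofReal C := by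
    rw [hGdef, lintegral_indicator measurableSet_Ioi]
    exact key
  set K : ℝ → ℝ → ENNReal :=
    fun t s => (Ioc (0:ℝ) t).indicator (fun s => (‖g (t - s)‖₊ : ENNReal)) s with hKdef
  have hKm : Measurable (Function.uncurry K) := by
    have h1 : MeasurableSet {p : ℝ × ℝ | 0 < p.2 ∧ p.2 ≤ p.1} :=
      (measurableSet_lt measurable_const measurable_snd).inter
        (measurableSet_le measurable_snd measurable_fst)
    have h2 : Measurable fun p : ℝ × ℝ => (‖g (p.1 - p.2)‖₊ : ENNReal) :=
      (hgm.comp (measurable_fst.sub measurable_snd)).nnnorm.coe_nnreal_ennreal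
    have heq : Function.uncurry K = {p : ℝ × ℝ | 0 < p.2 ∧ p.2 ≤ p.1}.indicator
        (fun p => (‖g (p.1 - p.2)‖₊ : ENNReal)) := by
      funext p
      simp only [Function.uncurry, hKdef, Set.indicator_apply, Set.mem_Ioc, Set.mem_setOf_eq]
    rw [heq]
    exact h2.indicator h1
  have hKtm : ∀ t, Measurable (K t) := fun t =>
    ((hgm.comp (measurable_const.sub measurable_id)).nnnorm.coe_nnreal_ennreal).indicator
      measurableSet_Ioc
  have hae_ne : ∀ c : ℝ, ∀ᵐ x : ℝ, x ≠ c := by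
    intro c
    rw [ae_iff]
    have h : {x : ℝ | ¬ x ≠ c} = {c} := by ext x; simp
    rw [h]
    exact measure_singleton c
  -- row bound
  have row : ∀ t : ℝ, ∫⁻ s, K t s ≤ ENNReal.ofReal C := by
    intro t
    have hle : ∀ᵐ s : ℝ, K t s ≤ G (t - s) := by
      filter_upwards [hae_ne t] with s hs
      by_cases h : s ∈ Ioc (0:ℝ) t
      · have h1 : t - s ∈ Ioi (0:ℝ) := by
          have : s < t := lt_of_le_of_ne h.2 hs
          simp only [Set.mem_Ioi]; linarith
        rw [hKdef]
        simp only [Set.indicator_of_mem h, hGdef, Set.indicator_of_mem h1]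
        exact le_refl _
      · simp [hKdef, Set.indicator_of_notMem h]
    calc ∫⁻ s, K t s ≤ ∫⁻ s, G (t - s) := lintegral_mono_ae hle
      _ = ∫⁻ u, G u := (Measure.measurePreserving_sub_left volume t).lintegral_comp hGm
      _ ≤ ENNReal.ofReal C := keyG
  -- column bound
  have col : ∀ s : ℝ, ∫⁻ t, K t s ≤ ENNReal.ofReal C := by
    intro s
    have hle : ∀ᵐ t : ℝ, K t s ≤ G (t - s) := by
      filter_upwards [hae_ne s] with t ht
      by_cases h : s ∈ Ioc (0:ℝ) t
      · have h1 : t - s ∈ Ioi (0:ℝ) := by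
          have : s < t := lt_of_le_of_ne h.2 (Ne.symm ht)
          simp only [Set.mem_Ioi]; linarith
        rw [hKdef]
        simp only [Set.indicator_of_mem h, hGdef, Set.indicator_of_mem h1]
        exact le_refl _
      · simp [hKdef, Set.indicator_of_notMem h]
    calc ∫⁻ t, K t s ≤ ∫⁻ t, G (t - s) := lintegral_mono_ae hle
      _ = ∫⁻ u, G u := lintegral_sub_right_eq_self G s
      _ ≤ ENNReal.ofReal C := keyG
  set φ : ℝ → ENNReal := fun s => (‖f s‖₊ : ENNReal) with hφdef
  have hφm : Measurable φ := hf.nnnorm.coe_nnreal_ennreal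
  set ψ : ℝ → ENNReal := fun s => φ s * φ s with hψdef
  -- Cauchy-Schwarz (Schur test, one line)
  have CS : ∀ t : ℝ, (∫⁻ s, K t s * φ s) * (∫⁻ s, K t s * φ s)
      ≤ ENNReal.ofReal C * ∫⁻ s, K t s * ψ s := by
    intro t
    have hconj : Real.HolderConjugate 2 2 := ⟨by norm_num, by norm_num, by norm_num⟩
    have hps : ∀ x : ENNReal, (x ^ (1/2:ℝ)) ^ (2:ℝ) = x := fun x => by
      rw [← ENNReal.rpow_mul]; norm_num
    have hsq : ∀ x : ENNReal, x ^ (1/2:ℝ) * x ^ (1/2:ℝ) = x := fun x => by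
      rw [← ENNReal.rpow_add_of_nonneg _ _ (by norm_num) (by norm_num)]; norm_num
    have hfmeas : AEMeasurable (fun s => K t s ^ (1/2:ℝ)) volume :=
      ((hKtm t).pow_const _).aemeasurable
    have hgmeas : AEMeasurable (fun s => K t s ^ (1/2:ℝ) * φ s) volume :=
      (((hKtm t).pow_const _).mul hφm).aemeasurable
    have hH := ENNReal.lintegral_mul_le_Lp_mul_Lq volume hconj hfmeas hgmeas
    have hX : ∫⁻ s, ((fun s => K t s ^ (1/2:ℝ)) * fun s => K t s ^ (1/2:ℝ) * φ s) s
        = ∫⁻ s, K t s * φ s := by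
      refine lintegral_congr fun s => ?_
      simp only [Pi.mul_apply]
      rw [← mul_assoc, hsq]
    have hA : ∫⁻ s, (K t s ^ (1/2:ℝ)) ^ (2:ℝ) = ∫⁻ s, K t s :=
      lintegral_congr fun s => hps _
    have hB : ∫⁻ s, (K t s ^ (1/2:ℝ) * φ s) ^ (2:ℝ) = ∫⁻ s, K t s * ψ s := by
      refine lintegral_congr fun s => ?_
      rw [ENNReal.mul_rpow_of_nonneg _ _ (by norm_num : (0:ℝ) ≤ 2), hps,
        ENNReal.rpow_two, hψdef, sq]
    rw [hX, hA, hB] at hH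
    calc (∫⁻ s, K t s * φ s) * (∫⁻ s, K t s * φ s)
        ≤ ((∫⁻ s, K t s) ^ (1/2:ℝ) * (∫⁻ s, K t s * ψ s) ^ (1/2:ℝ)) *
          ((∫⁻ s, K t s) ^ (1/2:ℝ) * (∫⁻ s, K t s * ψ s) ^ (1/2:ℝ)) := mul_le_mul' hH hH
      _ = (∫⁻ s, K t s) * (∫⁻ s, K t s * ψ s) := by
          rw [mul_mul_mul_comm, hsq, hsq]
      _ ≤ ENNReal.ofReal C * ∫⁻ s, K t s * ψ s := mul_le_mul_left (row t) _
  -- definition of the operator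
  set F : ℝ → ℂ := fun t => ∫ s in Ioc (0:ℝ) t,
      ((t : ℂ) - s) ^ (α - 1) * z ^ α * Complex.exp (-((t : ℂ) - s) * z) * f s with hFdef
  have hbridge : ∀ t s : ℝ,
      ((t : ℂ) - s) ^ (α - 1) * z ^ α * Complex.exp (-((t : ℂ) - s) * z) = g (t - s) := by
    intro t s
    rw [hgdef]
    simp only [Complex.ofReal_sub]
  -- pointwise bound on ‖F t‖
  have step1 : ∀ t : ℝ, (‖F t‖₊ : ENNReal) ≤ ∫⁻ s, K t s * φ s := by
    intro t
    calc (‖F t‖₊ : ENNReal)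
        ≤ ∫⁻ s in Ioc (0:ℝ) t,
            ‖((t : ℂ) - s) ^ (α - 1) * z ^ α * Complex.exp (-((t : ℂ) - s) * z) * f s‖₊ :=
          enorm_integral_le_lintegral_enorm _
      _ = ∫⁻ s, K t s * φ s := by
          rw [← lintegral_indicator measurableSet_Ioc]
          refine lintegral_congr fun s => ?_
          by_cases h : s ∈ Ioc (0:ℝ) t
          · rw [Set.indicator_of_mem h, hKdef]
            simp only [Set.indicator_of_mem h, hφdef, hbridge t s, nnnorm_mul,
              ENNReal.coe_mul]
          · rw [Set.indicator_of_notMem h, hKdef]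
            simp [Set.indicator_of_notMem h]
  -- swap
  have hswap : ∫⁻ t, ∫⁻ s, K t s * ψ s = ∫⁻ s, ∫⁻ t, K t s * ψ s := by
    apply lintegral_lintegral_swap
    exact (hKm.mul (((hφm.comp measurable_snd)).mul (hφm.comp measurable_snd))).aemeasurable
  -- inner bound after swap
  have inner_le : ∀ s : ℝ, (∫⁻ t, K t s * ψ s)
      ≤ (Ioi (0:ℝ)).indicator (fun s => ENNReal.ofReal C * ψ s) s := by
    intro s
    have hψfin : ψ s ≠ ⊤ := by
      rw [hψdef, hφdef]
      exact ENNReal.mul_ne_top ENNReal.coe_ne_top ENNReal.coe_ne_top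
    rw [lintegral_mul_const' (ψ s) _ hψfin]
    by_cases h : s ∈ Ioi (0:ℝ)
    · rw [Set.indicator_of_mem h]
      exact mul_le_mul_left (col s) _
    · rw [Set.indicator_of_notMem h]
      have hz0 : ∀ t, K t s = 0 := by
        intro t
        rw [hKdef]
        exact Set.indicator_of_notMem (fun hc => h (Set.mem_Ioi.mpr hc.1)) _
      simp [hz0]
  -- conversion of the RHS
  have hI : ∫⁻ s in Ioi (0:ℝ), ψ s = ENNReal.ofReal (∫ s in Ioi (0:ℝ), ‖f s‖ ^ 2) := by
    have h1 : ∫⁻ s in Ioi (0:ℝ), ψ s = ∫⁻ s in Ioi (0:ℝ), ENNReal.ofReal (‖f s‖ ^ 2) := by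
      refine lintegral_congr fun s => ?_
      rw [hψdef, hφdef, sq, ENNReal.ofReal_mul (norm_nonneg _), ofReal_norm_eq_coe_nnnorm]
    rw [h1]
    exact (ofReal_integral_eq_lintegral_ofReal hfi
      (ae_of_all _ fun s => by positivity)).symm
  -- measurability of F
  have hFsm : AEStronglyMeasurable F (volume.restrict (Ioi 0)) := by
    have h1 : MeasurableSet {p : ℝ × ℝ | 0 < p.2 ∧ p.2 ≤ p.1} :=
      (measurableSet_lt measurable_const measurable_snd).inter
        (measurableSet_le measurable_snd measurable_fst)
    have h2 : Measurable fun p : ℝ × ℝ => g (p.1 - p.2) * f p.2 :=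
      (hgm.comp (measurable_fst.sub measurable_snd)).mul (hf.comp measurable_snd)
    have hm : Measurable fun p : ℝ × ℝ =>
        (Ioc (0:ℝ) p.1).indicator (fun s => g (p.1 - s) * f s) p.2 := by
      have heq : (fun p : ℝ × ℝ => (Ioc (0:ℝ) p.1).indicator (fun s => g (p.1 - s) * f s) p.2)
          = {p : ℝ × ℝ | 0 < p.2 ∧ p.2 ≤ p.1}.indicator (fun p => g (p.1 - p.2) * f p.2) := by
        funext p
        simp only [Set.indicator_apply, Set.mem_Ioc, Set.mem_setOf_eq]
      rw [heq]
      exact h2.indicator h1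
    have hFalt : F = fun t => ∫ s, (Ioc (0:ℝ) t).indicator (fun s => g (t - s) * f s) s := by
      funext t
      rw [hFdef, integral_indicator measurableSet_Ioc]
      refine setIntegral_congr_fun measurableSet_Ioc fun s _ => ?_
      rw [hbridge t s]
    rw [hFalt]
    exact (hm.stronglyMeasurable.integral_prod_right').aestronglyMeasurable.restrict
  -- final assembly
  show (∫ t in Ioi (0:ℝ), ‖F t‖ ^ 2) ≤ C ^ 2 * ∫ s in Ioi (0:ℝ), ‖f s‖ ^ 2
  have hJ0 : 0 ≤ ∫ s in Ioi (0:ℝ), ‖f s‖ ^ 2 := integral_nonneg fun s => by positivity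
  rw [integral_eq_lintegral_of_nonneg_ae (ae_of_all _ fun t => by positivity)
    ((hFsm.norm.aemeasurable.pow_const 2).aestronglyMeasurable)]
  apply ENNReal.toReal_le_of_le_ofReal (by positivity)
  calc ∫⁻ t in Ioi (0:ℝ), ENNReal.ofReal (‖F t‖ ^ 2)
      = ∫⁻ t in Ioi (0:ℝ), (‖F t‖₊ : ENNReal) * (‖F t‖₊ : ENNReal) := by
        refine lintegral_congr fun t => ?_
        rw [sq, ENNReal.ofReal_mul (norm_nonneg _), ofReal_norm_eq_coe_nnnorm]
    _ ≤ ∫⁻ t in Ioi (0:ℝ), ENNReal.ofReal C * ∫⁻ s, K t s * ψ s := by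
        refine lintegral_mono fun t => ?_
        exact le_trans (mul_le_mul' (step1 t) (step1 t)) (CS t)
    _ = ENNReal.ofReal C * ∫⁻ t in Ioi (0:ℝ), ∫⁻ s, K t s * ψ s :=
        lintegral_const_mul' _ _ ENNReal.ofReal_ne_top
    _ ≤ ENNReal.ofReal C * ∫⁻ t, ∫⁻ s, K t s * ψ s :=
        mul_le_mul_right (setLIntegral_le_lintegral _ _) _
    _ = ENNReal.ofReal C * ∫⁻ s, ∫⁻ t, K t s * ψ s := by rw [hswap]
    _ ≤ ENNReal.ofReal C * ∫⁻ s, (Ioi (0:ℝ)).indicator (fun s => ENNReal.ofReal C * ψ s) s :=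
        mul_le_mul_right (lintegral_mono inner_le) _
    _ = ENNReal.ofReal C * (ENNReal.ofReal C * ∫⁻ s in Ioi (0:ℝ), ψ s) := by
        rw [lintegral_indicator measurableSet_Ioi,
          lintegral_const_mul' _ _ ENNReal.ofReal_ne_top]
    _ = ENNReal.ofReal (C ^ 2 * ∫ s in Ioi (0:ℝ), ‖f s‖ ^ 2) := by
        rw [hI, ← ENNReal.ofReal_mul hC0, ← ENNReal.ofReal_mul hC0]
        congr 1
        ring
end

section
/- Let M > 0, γ ≥ 0, c > 0, R > 0 with 2K > R + γ where K ∈ ℕ, and let a ∈ (0, R], d ≥ 0, t > 0. Then ∫₀^∞ s^{a+γ} e^{−c s} (1 + d^{2m} s² / t²)^{−K} ds/s ≤ C(a, γ, c, K) (1 + d^m / t)^{−a−γ}, where m is a positive integer and C does not depend on d or t. -/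
open MeasureTheory Set Real

private lemma aux_F_int (p : ℝ) (hp : 0 < p) (K : ℕ) (hpK : p < 2*K) :
    IntegrableOn (fun u : ℝ => u ^ (p-1) * (1+u^2) ^ (-(K:ℝ))) (Ioi 0) := by
  have hmeas : Measurable (fun u : ℝ => u ^ (p-1) * (1+u^2) ^ (-(K:ℝ))) := by
    fun_prop
  rw [← Ioc_union_Ioi_eq_Ioi (zero_le_one (α := ℝ)), integrableOn_union]
  constructor
  · have hint : IntegrableOn (fun u : ℝ => u ^ (p-1)) (Ioc (0:ℝ) 1) := by
      have := intervalIntegral.intervalIntegrable_rpow' (a := 0) (b := 1)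
        (by linarith : (-1:ℝ) < p - 1)
      rwa [intervalIntegrable_iff, uIoc_of_le zero_le_one] at this
    refine hint.mono' hmeas.aestronglyMeasurable ?_
    filter_upwards [self_mem_ae_restrict measurableSet_Ioc] with u hu
    have hu0 : 0 < u := hu.1
    have h1 : (1+u^2) ^ (-(K:ℝ)) ≤ 1 :=
      Real.rpow_le_one_of_one_le_of_nonpos (by nlinarith) (neg_nonpos.mpr (Nat.cast_nonneg K))
    have h2 : 0 ≤ (1+u^2) ^ (-(K:ℝ)) := Real.rpow_nonneg (by positivity) _
    rw [Real.norm_eq_abs, abs_of_nonneg (by positivity)]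
    nlinarith [Real.rpow_pos_of_pos hu0 (p-1)]
  · have hint : IntegrableOn (fun u : ℝ => u ^ (p-1-2*K)) (Ioi (1:ℝ)) :=
      integrableOn_Ioi_rpow_of_lt (by linarith) zero_lt_one
    refine hint.mono' hmeas.aestronglyMeasurable ?_
    filter_upwards [self_mem_ae_restrict measurableSet_Ioi] with u hu
    have hu1 : (1:ℝ) < u := hu
    have hu0 : 0 < u := lt_trans zero_lt_one hu1
    rw [Real.norm_eq_abs, abs_of_nonneg (by positivity)]
    have h1 : (1+u^2) ^ (-(K:ℝ)) ≤ (u^2 : ℝ) ^ (-(K:ℝ)) :=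
      Real.rpow_le_rpow_of_nonpos (by positivity) (by nlinarith)
        (neg_nonpos.mpr (Nat.cast_nonneg K))
    have h2 : (u^2 : ℝ) ^ (-(K:ℝ)) = u ^ (-(2*K):ℝ) := by
      rw [← Real.rpow_natCast u 2, ← Real.rpow_mul hu0.le]
      congr 1
      push_cast
      ring
    calc u ^ (p-1) * (1+u^2) ^ (-(K:ℝ)) ≤ u ^ (p-1) * u ^ (-(2*K):ℝ) := by
          exact mul_le_mul_of_nonneg_left (h2 ▸ h1) (by positivity)
      _ = u ^ (p-1-2*K) := by rw [← Real.rpow_add hu0]; ring_nf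

private lemma aux_G_int (p c : ℝ) (hp : 0 < p) (hc : 0 < c) :
    IntegrableOn (fun s : ℝ => s ^ (p-1) * Real.exp (-c*s)) (Ioi 0) := by
  have h1 : IntegrableOn (fun x : ℝ => Real.exp (-x) * x ^ (p-1)) (Ioi 0) :=
    Real.GammaIntegral_convergent hp
  have h2 : IntegrableOn (fun s : ℝ => Real.exp (-(c*s)) * (c*s) ^ (p-1)) (Ioi 0) := by
    have := (integrableOn_Ioi_comp_mul_left_iff
      (fun x : ℝ => Real.exp (-x) * x ^ (p-1)) 0 hc).mpr (by simpa using h1)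
    exact this
  have h3 := h2.const_mul (c ^ (1-p))
  refine h3.congr ?_
  filter_upwards [self_mem_ae_restrict measurableSet_Ioi] with s hs
  have hs0 : (0:ℝ) < s := hs
  rw [Real.mul_rpow hc.le hs0.le]
  have : c ^ (1-p) * c ^ (p-1) = 1 := by
    rw [← Real.rpow_add hc]; norm_num
  calc c ^ (1-p) * (Real.exp (-(c*s)) * (c ^ (p-1) * s ^ (p-1)))
      = (c ^ (1-p) * c ^ (p-1)) * (s ^ (p-1) * Real.exp (-(c*s))) := by ring
    _ = s ^ (p-1) * Real.exp (-c*s) := by rw [this, one_mul, neg_mul]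

private lemma aux_key (p c : ℝ) (hp : 0 < p) (hc : 0 < c) (K : ℕ) (hpK : p < 2*K) :
    ∃ C : ℝ, 0 < C ∧ ∀ x : ℝ, 0 ≤ x →
      ∫ s in Ioi (0:ℝ), s ^ p * Real.exp (-c*s) * (1 + x^2 * s^2) ^ (-(K:ℝ)) / s
        ≤ C * (1+x) ^ (-p) := by
  set F : ℝ → ℝ := fun u => u ^ (p-1) * (1+u^2) ^ (-(K:ℝ)) with hF
  set G : ℝ → ℝ := fun s => s ^ (p-1) * Real.exp (-c*s) with hG
  have hFint : IntegrableOn F (Ioi 0) := aux_F_int p hp K hpK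
  have hGint : IntegrableOn G (Ioi 0) := aux_G_int p c hp hc
  set A := ∫ u in Ioi (0:ℝ), F u with hA
  set B := ∫ s in Ioi (0:ℝ), G s with hB
  have hA0 : 0 ≤ A := setIntegral_nonneg measurableSet_Ioi (fun u hu => by
    have : (0:ℝ) < u := hu
    positivity)
  have hB0 : 0 ≤ B := setIntegral_nonneg measurableSet_Ioi (fun s hs => by
    have : (0:ℝ) < s := hs
    positivity)
  have h2p : (0:ℝ) < (2:ℝ) ^ p := Real.rpow_pos_of_pos two_pos p
  refine ⟨2 ^ p * (B + A + 1), by positivity, fun x hx => ?_⟩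
  -- rewrite the integrand
  set H : ℝ → ℝ := fun s => s ^ (p-1) * Real.exp (-c*s) * (1 + x^2*s^2) ^ (-(K:ℝ)) with hH
  have hrw : ∫ s in Ioi (0:ℝ), s ^ p * Real.exp (-c*s) * (1 + x^2 * s^2) ^ (-(K:ℝ)) / s
      = ∫ s in Ioi (0:ℝ), H s := by
    refine setIntegral_congr_fun measurableSet_Ioi (fun s hs => ?_)
    have hs0 : (0:ℝ) < s := hs
    simp only [hH]
    rw [Real.rpow_sub hs0, Real.rpow_one]
    ring
  rw [hrw]
  have hHmeas : Measurable H := by fun_prop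
  have hHnonneg : ∀ s ∈ Ioi (0:ℝ), 0 ≤ H s := fun s hs => by
    have hs0 : (0:ℝ) < s := hs
    have : (0:ℝ) < 1 + x^2*s^2 := by positivity
    positivity
  have hHleG : ∀ s ∈ Ioi (0:ℝ), H s ≤ G s := fun s hs => by
    have hs0 : (0:ℝ) < s := hs
    have h1 : (1 + x^2*s^2) ^ (-(K:ℝ)) ≤ 1 :=
      Real.rpow_le_one_of_one_le_of_nonpos (by nlinarith) (neg_nonpos.mpr (Nat.cast_nonneg K))
    have h2 : 0 < s ^ (p-1) * Real.exp (-c*s) := by positivity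
    calc H s ≤ s ^ (p-1) * Real.exp (-c*s) * 1 := by
          exact mul_le_mul_of_nonneg_left h1 h2.le
      _ = G s := by rw [mul_one]
  have hHint : IntegrableOn H (Ioi 0) := by
    refine hGint.mono' hHmeas.aestronglyMeasurable ?_
    filter_upwards [self_mem_ae_restrict measurableSet_Ioi] with s hs
    rw [Real.norm_eq_abs, abs_of_nonneg (hHnonneg s hs)]
    exact hHleG s hs
  rcases le_total x 1 with hx1 | hx1
  · -- small x : use ∫ H ≤ B and 1 ≤ 2^p (1+x)^(-p)
    have hIB : ∫ s in Ioi (0:ℝ), H s ≤ B :=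
      setIntegral_mono_on hHint hGint measurableSet_Ioi hHleG
    have hone : 1 ≤ 2 ^ p * (1+x) ^ (-p) := by
      rw [Real.rpow_neg (by linarith), ← div_eq_mul_inv, le_div_iff₀ (by positivity)]
      calc (1:ℝ) * (1+x) ^ p = (1+x) ^ p := one_mul _
        _ ≤ 2 ^ p := Real.rpow_le_rpow (by linarith) (by linarith) hp.le
    calc ∫ s in Ioi (0:ℝ), H s ≤ B := hIB
      _ ≤ (B + A + 1) * 1 := by linarith
      _ ≤ (B + A + 1) * (2 ^ p * (1+x) ^ (-p)) := by
          exact mul_le_mul_of_nonneg_left hone (by linarith)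
      _ = 2 ^ p * (B + A + 1) * (1+x) ^ (-p) := by ring
  · -- large x
    have hx0 : 0 < x := lt_of_lt_of_le one_pos hx1
    have hkey : ∫ s in Ioi (0:ℝ), H s ≤ x ^ (-p) * A := by
      have hcomp : IntegrableOn (fun s : ℝ => x ^ (1-p) * F (x*s)) (Ioi 0) := by
        have := (integrableOn_Ioi_comp_mul_left_iff F 0 hx0).mpr (by simpa using hFint)
        exact this.const_mul _
      have hmono : ∫ s in Ioi (0:ℝ), H s ≤ ∫ s in Ioi (0:ℝ), x ^ (1-p) * F (x*s) := by
        refine setIntegral_mono_on hHint hcomp measurableSet_Ioi (fun s hs => ?_)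
        have hs0 : (0:ℝ) < s := hs
        have hxs : (0:ℝ) < x*s := by positivity
        have hFxs : x ^ (1-p) * F (x*s)
            = s ^ (p-1) * (1 + x^2*s^2) ^ (-(K:ℝ)) := by
          simp only [hF]
          rw [Real.mul_rpow hx0.le hs0.le, mul_pow]
          calc x ^ (1-p) * (x ^ (p-1) * s ^ (p-1) * (1 + x^2*s^2) ^ (-(K:ℝ)))
              = (x ^ (1-p) * x ^ (p-1)) * (s ^ (p-1) * (1 + x^2*s^2) ^ (-(K:ℝ))) := by ring
            _ = s ^ (p-1) * (1 + x^2*s^2) ^ (-(K:ℝ)) := by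
                rw [← Real.rpow_add hx0]; norm_num
        rw [hFxs]
        simp only [hH]
        have hexps : Real.exp (-c*s) ≤ 1 := by
          rw [Real.exp_le_one_iff]
          nlinarith
        have hpos : 0 ≤ s ^ (p-1) * (1 + x^2*s^2) ^ (-(K:ℝ)) := by
          have : (0:ℝ) < 1 + x^2*s^2 := by positivity
          positivity
        calc s ^ (p-1) * Real.exp (-c*s) * (1 + x^2*s^2) ^ (-(K:ℝ))
            = (s ^ (p-1) * (1 + x^2*s^2) ^ (-(K:ℝ))) * Real.exp (-c*s) := by ring
          _ ≤ (s ^ (p-1) * (1 + x^2*s^2) ^ (-(K:ℝ))) * 1 := by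
              exact mul_le_mul_of_nonneg_left hexps hpos
          _ = s ^ (p-1) * (1 + x^2*s^2) ^ (-(K:ℝ)) := mul_one _
      have hval : ∫ s in Ioi (0:ℝ), x ^ (1-p) * F (x*s) = x ^ (-p) * A := by
        rw [integral_const_mul, integral_comp_mul_left_Ioi F 0 hx0, mul_zero, smul_eq_mul, hA]
        rw [← mul_assoc]
        congr 1
        rw [← Real.rpow_neg_one x, ← Real.rpow_add hx0]
        congr 1
        ring
      rw [hval] at hmono
      exact hmono
    have hxp : x ^ (-p) ≤ 2 ^ p * (1+x) ^ (-p) := by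
      have h : (1+x) ^ p ≤ 2 ^ p * x ^ p := by
        rw [← Real.mul_rpow two_pos.le hx0.le]
        exact Real.rpow_le_rpow (by linarith) (by linarith) hp.le
      have hxp0 : (0:ℝ) < x ^ p := Real.rpow_pos_of_pos hx0 p
      rw [Real.rpow_neg hx0.le, Real.rpow_neg (by linarith), ← div_eq_mul_inv,
        le_div_iff₀ (by positivity)]
      calc (x ^ p)⁻¹ * (1+x) ^ p ≤ (x ^ p)⁻¹ * (2 ^ p * x ^ p) :=
            mul_le_mul_of_nonneg_left h (by positivity)
        _ = 2 ^ p := by field_simp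
    have h1x : (0:ℝ) < (1+x) ^ (-p) := Real.rpow_pos_of_pos (by linarith) _
    calc ∫ s in Ioi (0:ℝ), H s ≤ x ^ (-p) * A := hkey
      _ ≤ (2 ^ p * (1+x) ^ (-p)) * A := mul_le_mul_of_nonneg_right hxp hA0
      _ ≤ (2 ^ p * (1+x) ^ (-p)) * (B + A + 1) :=
          mul_le_mul_of_nonneg_left (by linarith) (by positivity)
      _ = 2 ^ p * (B + A + 1) * (1+x) ^ (-p) := by ring


/-- Key integral estimate: for `2K > R + γ`, `a ∈ (0, R]`, `d ≥ 0`, `t > 0`,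
`∫₀^∞ s^{a+γ} e^{−cs} (1 + d^{2m} s²/t²)^{−K} ds/s ≤ C (1 + d^m/t)^{−a−γ}`,
with `C` independent of `d` and `t`. -/
theorem stmt_9 (m : ℕ) (hm : 0 < m) (γ c R : ℝ) (hγ : 0 ≤ γ) (hc : 0 < c)
    (hR : 0 < R) (K : ℕ) (hK : R + γ < 2 * K) (a : ℝ) (ha : a ∈ Ioc (0:ℝ) R) :
    ∃ C : ℝ, 0 < C ∧ ∀ d t : ℝ, 0 ≤ d → 0 < t →
      ∫ s in Ioi (0:ℝ),
          s ^ (a + γ) * Real.exp (-c * s) * (1 + d ^ (2 * m) * s ^ 2 / t ^ 2) ^ (-(K:ℝ)) / s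
        ≤ C * (1 + d ^ m / t) ^ (-(a + γ)) := by
  obtain ⟨ha0, haR⟩ := ha
  have hp : 0 < a + γ := by linarith
  have hpK : a + γ < 2 * K := by linarith
  obtain ⟨C, hC, hCb⟩ := aux_key (a + γ) c hp hc K hpK
  refine ⟨C, hC, fun d t hd ht => ?_⟩
  have hx : 0 ≤ d ^ m / t := by positivity
  have h := hCb (d ^ m / t) hx
  have hfun : ∀ s : ℝ, (1 + d ^ (2 * m) * s ^ 2 / t ^ 2)
      = (1 + (d ^ m / t) ^ 2 * s ^ 2) := fun s => by
    rw [pow_mul' d 2 m]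
    ring
  simp only [hfun]
  exact h
end

section
/- Let β < 1 and K : {0 < s < t} → ℝ with |K(t,s)| ≤ C/(t−s). For α ∈ ℂ with Re α > (β−1)/2, define J_α f(t) = ∫₀^{t/2} (s/t)^α K(t,s) f(s) ds for f : (0,∞) → ℝ. Then J_α is bounded on L²((0,∞), t^β dt) with norm at most C'(Re α − (β−1)/2, C) depending only on Re α − (β−1)/2 and C. -/
open MeasureTheory Set

section aux
open MeasureTheory Set ENNReal

lemma lint_Ioc_rpow {b c : ℝ} (hb : 0 < b) (hc : -1 < c) :
    ∫⁻ s in Ioc (0:ℝ) b, ENNReal.ofReal (s ^ c) = ENNReal.ofReal (b ^ (c+1) / (c+1)) := by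
  rw [← ofReal_integral_eq_lintegral_ofReal]
  · rw [← intervalIntegral.integral_of_le hb.le, integral_rpow (Or.inl hc),
      Real.zero_rpow (by linarith : c + 1 ≠ 0), sub_zero]
  · exact (intervalIntegral.intervalIntegrable_rpow' hc).1
  · exact (ae_restrict_iff' measurableSet_Ioc).2 (ae_of_all _ fun s hs => Real.rpow_nonneg hs.1.le c)

lemma lint_Ioi_rpow {c e : ℝ} (hc : 0 < c) (he : e < -1) :
    ∫⁻ t in Ioi c, ENNReal.ofReal (t ^ e) = ENNReal.ofReal (-c ^ (e+1) / (e+1)) := by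
  rw [← ofReal_integral_eq_lintegral_ofReal (integrableOn_Ioi_rpow_of_lt he hc)]
  · rw [integral_Ioi_rpow_of_lt he hc]
  · exact (ae_restrict_iff' measurableSet_Ioi).2
      (ae_of_all _ fun t ht => Real.rpow_nonneg (hc.trans ht).le e)

lemma lint_CS {α : Type*} [MeasurableSpace α] (μ : Measure α) {u v : α → ℝ≥0∞}
    (hu : AEMeasurable u μ) (hv : AEMeasurable v μ) :
    (∫⁻ a, u a * v a ∂μ) ^ 2 ≤ (∫⁻ a, u a ^ 2 ∂μ) * (∫⁻ a, v a ^ 2 ∂μ) := by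
  have h := ENNReal.lintegral_mul_le_Lp_mul_Lq μ (p := 2) (q := 2) Real.HolderConjugate.two_two hu hv
  have e1 : ∀ x : ℝ≥0∞, x ^ (2:ℝ) = x ^ 2 := fun x => by
    rw [← ENNReal.rpow_natCast x 2]; norm_num
  have e2 : ∀ x : ℝ≥0∞, (x ^ (1/2:ℝ)) ^ 2 = x := fun x => by
    rw [← e1, ← ENNReal.rpow_mul]; norm_num
  calc (∫⁻ a, u a * v a ∂μ) ^ 2
      ≤ ((∫⁻ a, u a ^ (2:ℝ) ∂μ) ^ (1/2:ℝ) * (∫⁻ a, v a ^ (2:ℝ) ∂μ) ^ (1/2:ℝ)) ^ 2 :=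
        pow_le_pow_left' h 2
    _ = (∫⁻ a, u a ^ 2 ∂μ) * (∫⁻ a, v a ^ 2 ∂μ) := by
        rw [mul_pow, e2, e2]; simp only [e1]

lemma schur {β C ρ : ℝ} (hC : 0 ≤ C) (ha : 0 < ρ - (β-1)/2)
    (f : ℝ → ℝ) (hf : Measurable f) :
    ∫⁻ t in Ioi (0:ℝ),
        (∫⁻ s in Ioc (0:ℝ) (t/2), ENNReal.ofReal ((s/t) ^ ρ * (2*C/t) * |f s|)) ^ 2
          * ENNReal.ofReal (t ^ β)
      ≤ ENNReal.ofReal ((2:ℝ) ^ (2-2*(ρ - (β-1)/2)) * C^2 / (ρ - (β-1)/2)^2)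
          * ∫⁻ s in Ioi (0:ℝ), ENNReal.ofReal (f s ^ 2 * s ^ β) := by
  set a : ℝ := ρ - (β-1)/2 with ha_def
  set p : ℝ := -(1+β)/2 with hp_def
  set c₀ : ℝ := (2:ℝ) ^ (2-a) * C^2 / a with hc₀_def
  set M : ℝ := (2:ℝ) ^ (2-2*a) * C^2 / a^2 with hM_def
  have hc₀ : 0 ≤ c₀ := by
    rw [hc₀_def]; positivity
  have hM : 0 ≤ M := by rw [hM_def]; positivity
  have hρp : ρ + p = a - 1 := by rw [ha_def, hp_def]; ring
  have hρp' : ρ - p = a + β := by rw [ha_def, hp_def]; ring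
  clear_value a p c₀ M
  -- Step 1: pointwise Cauchy-Schwarz bound
  have key : ∀ t : ℝ, t ∈ Ioi (0:ℝ) →
      (∫⁻ s in Ioc (0:ℝ) (t/2), ENNReal.ofReal ((s/t) ^ ρ * (2*C/t) * |f s|)) ^ 2
        * ENNReal.ofReal (t ^ β)
      ≤ ENNReal.ofReal (c₀ * t ^ (-a-1)) *
          ∫⁻ s in Ioc (0:ℝ) (t/2), ENNReal.ofReal (s ^ (ρ-p) * f s ^ 2) := by
    intro t ht
    rw [mem_Ioi] at ht
    set c : ℝ := 2*C*t^(-(ρ+1)) with hc_def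
    have hc : 0 ≤ c := by rw [hc_def]; positivity
    clear_value c
    set u : ℝ → ℝ≥0∞ := fun s => ENNReal.ofReal (Real.sqrt ((s/t) ^ ρ * (2*C/t) * s ^ p)) with hu_def
    set v : ℝ → ℝ≥0∞ := fun s =>
      ENNReal.ofReal (Real.sqrt ((s/t) ^ ρ * (2*C/t) * (s ^ (-p) * f s ^ 2))) with hv_def
    have hum : AEMeasurable u (volume.restrict (Ioc (0:ℝ) (t/2))) := by
      apply Measurable.aemeasurable; rw [hu_def]; fun_prop
    have hvm : AEMeasurable v (volume.restrict (Ioc (0:ℝ) (t/2))) := by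
      apply Measurable.aemeasurable; rw [hv_def]; fun_prop
    -- facts valid for s in the domain
    have hP : ∀ s : ℝ, s ∈ Ioc (0:ℝ) (t/2) → 0 ≤ (s/t) ^ ρ * (2*C/t) := by
      intro s hs
      have := hs.1
      positivity
    have e_uv : (∫⁻ s in Ioc (0:ℝ) (t/2), ENNReal.ofReal ((s/t) ^ ρ * (2*C/t) * |f s|))
        = ∫⁻ s in Ioc (0:ℝ) (t/2), u s * v s := by
      apply setLIntegral_congr_fun measurableSet_Ioc
      intro s hs
      have hsp : s ^ p * s ^ (-p) = 1 := by
        rw [← Real.rpow_add hs.1]; simp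
      have hPs := hP s hs
      have hprod : ((s/t) ^ ρ * (2*C/t) * s ^ p) * ((s/t) ^ ρ * (2*C/t) * (s ^ (-p) * f s ^ 2))
          = ((s/t) ^ ρ * (2*C/t) * |f s|) ^ 2 := by
        have : ((s/t) ^ ρ * (2*C/t) * s ^ p) * ((s/t) ^ ρ * (2*C/t) * (s ^ (-p) * f s ^ 2))
            = ((s/t) ^ ρ * (2*C/t))^2 * (f s ^ 2) * (s ^ p * s ^ (-p)) := by ring
        rw [this, hsp, mul_one, mul_pow ((s/t) ^ ρ * (2*C/t)) (|f s|) 2, sq_abs]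
      rw [hu_def, hv_def]
      simp only
      rw [← ENNReal.ofReal_mul (Real.sqrt_nonneg _),
        ← Real.sqrt_mul (mul_nonneg hPs (Real.rpow_nonneg hs.1.le _)), hprod,
        Real.sqrt_sq (mul_nonneg hPs (abs_nonneg _))]
    have e_u2 : (∫⁻ s in Ioc (0:ℝ) (t/2), u s ^ 2)
        = ENNReal.ofReal c * ENNReal.ofReal ((t/2) ^ a / a) := by
      have e1 : (∫⁻ s in Ioc (0:ℝ) (t/2), u s ^ 2)
          = ∫⁻ s in Ioc (0:ℝ) (t/2), ENNReal.ofReal c * ENNReal.ofReal (s ^ (ρ+p)) := by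
        apply setLIntegral_congr_fun measurableSet_Ioc
        intro s hs
        have hPs := hP s hs
        rw [hu_def]
        simp only
        rw [← ENNReal.ofReal_pow (Real.sqrt_nonneg _),
          Real.sq_sqrt (mul_nonneg hPs (Real.rpow_nonneg hs.1.le _)),
          ← ENNReal.ofReal_mul hc]
        congr 1
        rw [hc_def, Real.div_rpow hs.1.le ht.le, Real.rpow_add hs.1, Real.rpow_neg ht.le,
          Real.rpow_add ht, Real.rpow_one]
        have h1 : t ^ ρ ≠ 0 := by positivity
        field_simp
      rw [e1, lintegral_const_mul' _ _ ENNReal.ofReal_ne_top,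
        lint_Ioc_rpow (by linarith) (by rw [hρp]; linarith)]
      congr 2
      rw [hρp]; ring_nf
    have e_v2 : (∫⁻ s in Ioc (0:ℝ) (t/2), v s ^ 2)
        = ENNReal.ofReal c * ∫⁻ s in Ioc (0:ℝ) (t/2), ENNReal.ofReal (s ^ (ρ-p) * f s ^ 2) := by
      have e1 : (∫⁻ s in Ioc (0:ℝ) (t/2), v s ^ 2)
          = ∫⁻ s in Ioc (0:ℝ) (t/2),
              ENNReal.ofReal c * ENNReal.ofReal (s ^ (ρ-p) * f s ^ 2) := by
        apply setLIntegral_congr_fun measurableSet_Ioc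
        intro s hs
        have hPs := hP s hs
        rw [hv_def]
        simp only
        rw [← ENNReal.ofReal_pow (Real.sqrt_nonneg _),
          Real.sq_sqrt (mul_nonneg hPs (mul_nonneg (Real.rpow_nonneg hs.1.le _) (sq_nonneg _))),
          ← ENNReal.ofReal_mul hc]
        congr 1
        rw [hc_def, Real.div_rpow hs.1.le ht.le, sub_eq_add_neg ρ p, Real.rpow_add hs.1,
          Real.rpow_neg ht.le, Real.rpow_add ht, Real.rpow_one]
        have h1 : t ^ ρ ≠ 0 := by positivity
        field_simp
      rw [e1, lintegral_const_mul' _ _ ENNReal.ofReal_ne_top]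
    have hscal : ENNReal.ofReal c * ENNReal.ofReal ((t/2) ^ a / a) * ENNReal.ofReal c
        * ENNReal.ofReal (t ^ β) = ENNReal.ofReal (c₀ * t ^ (-a-1)) := by
      rw [← ENNReal.ofReal_mul hc, ← ENNReal.ofReal_mul (by positivity),
        ← ENNReal.ofReal_mul (by positivity)]
      congr 1
      have hT : t ^ (-(ρ+1)) * t ^ (-(ρ+1)) * t ^ a * t ^ β = t ^ (-a-1) := by
        rw [← Real.rpow_add ht, ← Real.rpow_add ht, ← Real.rpow_add ht]
        congr 1
        rw [ha_def]; ring
      have h2 : (2:ℝ) ^ (2-a) = 4 / 2 ^ a := by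
        rw [Real.rpow_sub two_pos]
        norm_num
      have h4 : (t/2) ^ a = t ^ a / 2 ^ a := Real.div_rpow ht.le two_pos.le a
      rw [hc_def, hc₀_def]
      calc 2*C*t^(-(ρ+1)) * ((t/2)^a/a) * (2*C*t^(-(ρ+1))) * t^β
          = (4*C^2/((2:ℝ)^a*a)) * (t^(-(ρ+1)) * t^(-(ρ+1)) * t^a * t^β) := by rw [h4]; ring
        _ = 4/(2:ℝ)^a * C^2/a * t^(-a-1) := by rw [hT]; ring
        _ = (2:ℝ)^(2-a) * C^2/a * t^(-a-1) := by rw [h2]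
        _ = (2:ℝ)^(2-a) * C^2/a * t^(-a-1) := rfl
    calc (∫⁻ s in Ioc (0:ℝ) (t/2), ENNReal.ofReal ((s/t) ^ ρ * (2*C/t) * |f s|)) ^ 2
          * ENNReal.ofReal (t ^ β)
        ≤ ((∫⁻ s in Ioc (0:ℝ) (t/2), u s ^ 2) * (∫⁻ s in Ioc (0:ℝ) (t/2), v s ^ 2))
          * ENNReal.ofReal (t ^ β) := by
          rw [e_uv]; exact mul_le_mul_left (lint_CS _ hum hvm) _
      _ = (ENNReal.ofReal c * ENNReal.ofReal ((t/2) ^ a / a) * ENNReal.ofReal c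
            * ENNReal.ofReal (t ^ β))
          * ∫⁻ s in Ioc (0:ℝ) (t/2), ENNReal.ofReal (s ^ (ρ-p) * f s ^ 2) := by
          rw [e_u2, e_v2]; ring
      _ = ENNReal.ofReal (c₀ * t ^ (-a-1)) *
            ∫⁻ s in Ioc (0:ℝ) (t/2), ENNReal.ofReal (s ^ (ρ-p) * f s ^ 2) := by rw [hscal]
  -- Step 2: Tonelli
  set S : Set (ℝ × ℝ) := {q | 0 < q.2 ∧ q.2 ≤ q.1/2} with hS_def
  have hSm : MeasurableSet S := by
    apply MeasurableSet.inter
    · exact measurableSet_lt measurable_const measurable_snd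
    · exact measurableSet_le measurable_snd (measurable_fst.div_const 2)
  set g : ℝ × ℝ → ℝ≥0∞ :=
    fun q => ENNReal.ofReal (c₀ * q.1 ^ (-a-1)) * ENNReal.ofReal (q.2 ^ (ρ-p) * f q.2 ^ 2)
    with hg_def
  have hgm : Measurable g := by rw [hg_def]; fun_prop
  have step2 : (∫⁻ t in Ioi (0:ℝ), ENNReal.ofReal (c₀ * t ^ (-a-1)) *
        ∫⁻ s in Ioc (0:ℝ) (t/2), ENNReal.ofReal (s ^ (ρ-p) * f s ^ 2))
      = ∫⁻ t in Ioi (0:ℝ), ∫⁻ s, S.indicator g (t, s) := by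
    refine lintegral_congr fun t => ?_
    rw [← lintegral_const_mul' _ _ ENNReal.ofReal_ne_top,
      ← lintegral_indicator measurableSet_Ioc]
    congr 1
  have step3 : (∫⁻ t in Ioi (0:ℝ), ∫⁻ s, S.indicator g (t, s))
      = ∫⁻ s, ∫⁻ t in Ioi (0:ℝ), S.indicator g (t, s) :=
    lintegral_lintegral_swap (hgm.indicator hSm).aemeasurable
  have h2a : (2:ℝ) ^ (2-a) * 2 ^ (-a) = 2 ^ (2-2*a) := by
    rw [← Real.rpow_add two_pos]; congr 1; ring
  have step4 : ∀ s : ℝ, (∫⁻ t in Ioi (0:ℝ), S.indicator g (t, s))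
      = (Ioi (0:ℝ)).indicator
          (fun s' => ENNReal.ofReal M * ENNReal.ofReal (f s' ^ 2 * s' ^ β)) s := by
    intro s
    by_cases hs : 0 < s
    · rw [indicator_of_mem (show s ∈ Ioi 0 from hs)]
      have e1 : (fun t => S.indicator g (t, s))
          = (Ici (2*s)).indicator (fun t => ENNReal.ofReal (c₀ * t ^ (-a-1))
              * ENNReal.ofReal (s ^ (ρ-p) * f s ^ 2)) := by
        funext t
        by_cases h2s : 2*s ≤ t
        · rw [indicator_of_mem (show (t,s) ∈ S from ⟨hs, by linarith⟩),
            indicator_of_mem (show t ∈ Ici (2*s) from h2s)]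
        · rw [indicator_of_notMem
              (show (t,s) ∉ S from fun hq => h2s (by have := hq.2; dsimp at this; linarith)),
            indicator_of_notMem (show t ∉ Ici (2*s) from h2s)]
      have hinter : Ici (2*s) ∩ Ioi (0:ℝ) = Ici (2*s) :=
        inter_eq_left.mpr fun x hx => lt_of_lt_of_le (by positivity : (0:ℝ) < 2*s) hx
      rw [e1, lintegral_indicator measurableSet_Ici, Measure.restrict_restrict measurableSet_Ici,
        hinter, ← restrict_Ioi_eq_restrict_Ici,
        lintegral_mul_const' _ _ ENNReal.ofReal_ne_top]
      simp_rw [ENNReal.ofReal_mul hc₀]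
      rw [lintegral_const_mul' _ _ ENNReal.ofReal_ne_top,
        lint_Ioi_rpow (by positivity) (by linarith : -a-1 < -1),
        show (-a-1+1 : ℝ) = -a from by ring, neg_div_neg_eq,
        ← ENNReal.ofReal_mul hc₀,
        ← ENNReal.ofReal_mul
          (mul_nonneg hc₀ (div_nonneg (Real.rpow_nonneg (by positivity) _) ha.le)),
        ← ENNReal.ofReal_mul hM]
      congr 1
      have hm : (2*s) ^ (-a) = 2 ^ (-a) * s ^ (-a) := Real.mul_rpow two_pos.le hs.le
      have hss : s ^ (-a) * s ^ (ρ-p) = s ^ β := by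
        rw [← Real.rpow_add hs]; congr 1; rw [hρp']; ring
      calc c₀ * ((2*s) ^ (-a) / a) * (s ^ (ρ-p) * f s ^ 2)
          = (c₀ * 2 ^ (-a) / a) * ((s ^ (-a) * s ^ (ρ-p)) * f s ^ 2) := by rw [hm]; ring
        _ = (c₀ * 2 ^ (-a) / a) * (s ^ β * f s ^ 2) := by rw [hss]
        _ = M * (f s ^ 2 * s ^ β) := by rw [hc₀_def, hM_def, ← h2a]; ring
    · rw [indicator_of_notMem (show s ∉ Ioi 0 from hs)]
      have hz : ∀ t, S.indicator g (t, s) = 0 := fun t =>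
        indicator_of_notMem (fun hq => hs hq.1) _
      simp [hz]
  calc ∫⁻ t in Ioi (0:ℝ),
        (∫⁻ s in Ioc (0:ℝ) (t/2), ENNReal.ofReal ((s/t) ^ ρ * (2*C/t) * |f s|)) ^ 2
          * ENNReal.ofReal (t ^ β)
      ≤ ∫⁻ t in Ioi (0:ℝ), ENNReal.ofReal (c₀ * t ^ (-a-1)) *
          ∫⁻ s in Ioc (0:ℝ) (t/2), ENNReal.ofReal (s ^ (ρ-p) * f s ^ 2) :=
        lintegral_mono_ae ((ae_restrict_iff' measurableSet_Ioi).2 (ae_of_all _ key))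
    _ = ∫⁻ s, ∫⁻ t in Ioi (0:ℝ), S.indicator g (t, s) := by rw [step2, step3]
    _ = ∫⁻ s, (Ioi (0:ℝ)).indicator
          (fun s' => ENNReal.ofReal M * ENNReal.ofReal (f s' ^ 2 * s' ^ β)) s :=
        lintegral_congr step4
    _ = ENNReal.ofReal M * ∫⁻ s in Ioi (0:ℝ), ENNReal.ofReal (f s ^ 2 * s ^ β) := by
        rw [lintegral_indicator measurableSet_Ioi,
          lintegral_const_mul' _ _ ENNReal.ofReal_ne_top]

end aux

/-- Boundedness of the analytic family `J_α f(t) = ∫₀^{t/2} (s/t)^α K(t,s) f(s) ds`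
on `L²((0,∞), t^β dt)` for `β < 1` and `Re α > (β−1)/2`, with a constant
depending only on `Re α − (β−1)/2` and on the kernel constant `C`. -/
theorem stmt_11 :
    ∃ C' : ℝ → ℝ → ℝ,
      ∀ (β : ℝ), β < 1 → ∀ (C : ℝ) (K : ℝ → ℝ → ℝ),
      (∀ t s, 0 < s → s < t → |K t s| ≤ C / (t - s)) →
      ∀ (α : ℂ), (β - 1) / 2 < α.re →
      ∀ f : ℝ → ℝ, Measurable f →
        IntegrableOn (fun s => (f s) ^ 2 * s ^ β) (Ioi 0) →
        ∫ t in Ioi (0:ℝ),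
            ‖∫ s in Ioc (0:ℝ) (t / 2), ((s / t : ℂ)) ^ α * (K t s) * (f s)‖ ^ 2 * t ^ β
          ≤ C' (α.re - (β - 1) / 2) C * ∫ s in Ioi (0:ℝ), (f s) ^ 2 * s ^ β := by
  classical
  refine ⟨fun x c => (2:ℝ) ^ (2-2*x) * c^2 / x^2, ?_⟩
  intro β hβ C K hK α hα f hf hInt
  have hC : 0 ≤ C := le_trans (abs_nonneg (K 2 1)) (by have := hK 2 1 one_pos one_lt_two; norm_num at this; exact this)
  have ha : 0 < α.re - (β-1)/2 := sub_pos.mpr hα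
  have hRHS0 : 0 ≤ ∫ s in Ioi (0:ℝ), f s ^ 2 * s ^ β :=
    setIntegral_nonneg measurableSet_Ioi fun s hs =>
      mul_nonneg (sq_nonneg _) (Real.rpow_nonneg (le_of_lt hs) β)
  have hCnn : 0 ≤ (2:ℝ) ^ (2-2*(α.re-(β-1)/2)) * C^2 / (α.re-(β-1)/2)^2 := by positivity
  show _ ≤ (2:ℝ) ^ (2-2*(α.re-(β-1)/2)) * C^2 / (α.re-(β-1)/2)^2
      * ∫ s in Ioi (0:ℝ), (f s) ^ 2 * s ^ β
  by_cases hI : Integrable (fun t =>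
      ‖∫ s in Ioc (0:ℝ) (t/2), ((s / t : ℂ)) ^ α * (K t s) * (f s)‖ ^ 2 * t ^ β)
      (volume.restrict (Ioi (0:ℝ)))
  swap
  · rw [integral_undef hI]; exact mul_nonneg hCnn hRHS0
  have hnnL : 0 ≤ᵐ[volume.restrict (Ioi (0:ℝ))] fun t =>
      ‖∫ s in Ioc (0:ℝ) (t/2), ((s / t : ℂ)) ^ α * (K t s) * (f s)‖ ^ 2 * t ^ β :=
    (ae_restrict_iff' measurableSet_Ioi).2 (ae_of_all _ fun t ht =>
      mul_nonneg (sq_nonneg _) (Real.rpow_nonneg (le_of_lt ht) β))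
  have hnnR : 0 ≤ᵐ[volume.restrict (Ioi (0:ℝ))] fun s => f s ^ 2 * s ^ β :=
    (ae_restrict_iff' measurableSet_Ioi).2 (ae_of_all _ fun s hs =>
      mul_nonneg (sq_nonneg _) (Real.rpow_nonneg (le_of_lt hs) β))
  rw [integral_eq_lintegral_of_nonneg_ae hnnL hI.1]
  have hRHSlim : (∫⁻ s in Ioi (0:ℝ), ENNReal.ofReal (f s ^ 2 * s ^ β))
      = ENNReal.ofReal (∫ s in Ioi (0:ℝ), f s ^ 2 * s ^ β) :=
    (ofReal_integral_eq_lintegral_ofReal hInt hnnR).symm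
  have hpt : ∀ t ∈ Ioi (0:ℝ),
      ENNReal.ofReal (‖∫ s in Ioc (0:ℝ) (t/2), ((s / t : ℂ)) ^ α * (K t s) * (f s)‖ ^ 2 * t ^ β)
      ≤ (∫⁻ s in Ioc (0:ℝ) (t/2), ENNReal.ofReal ((s/t) ^ α.re * (2*C/t) * |f s|)) ^ 2
          * ENNReal.ofReal (t ^ β) := by
    intro t ht
    rw [mem_Ioi] at ht
    rw [ENNReal.ofReal_mul (sq_nonneg _), ENNReal.ofReal_pow (norm_nonneg _)]
    refine mul_le_mul_left (pow_le_pow_left' ?_ 2) _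
    rw [ofReal_norm]
    refine le_trans (enorm_integral_le_lintegral_enorm _) ?_
    refine lintegral_mono_ae ((ae_restrict_iff' measurableSet_Ioc).2 (ae_of_all _ fun s hs => ?_))
    rw [← ofReal_norm]
    apply ENNReal.ofReal_le_ofReal
    have hst : s < t := lt_of_le_of_lt hs.2 (by linarith)
    have hts : (0:ℝ) < t - s := by linarith
    have hKb : |K t s| ≤ 2*C/t := by
      refine le_trans (hK t s hs.1 hst) ?_
      rw [div_le_div_iff₀ hts ht]
      nlinarith [hs.2]
    have hnorm : ‖((s / t : ℂ)) ^ α * (K t s : ℂ) * (f s : ℂ)‖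
        = (s/t) ^ α.re * |K t s| * |f s| := by
      rw [norm_mul, norm_mul, show ((s:ℂ)/(t:ℂ)) = (((s/t : ℝ)):ℂ) by push_cast; ring,
        Complex.norm_cpow_eq_rpow_re_of_pos (div_pos hs.1 ht),
        Complex.norm_real, Complex.norm_real, Real.norm_eq_abs, Real.norm_eq_abs]
    rw [hnorm]
    exact mul_le_mul_of_nonneg_right
      (mul_le_mul_of_nonneg_left hKb (Real.rpow_nonneg (div_nonneg hs.1.le ht.le) _))
      (abs_nonneg _)
  have hEN : (∫⁻ t in Ioi (0:ℝ),
        ENNReal.ofReal (‖∫ s in Ioc (0:ℝ) (t/2), ((s / t : ℂ)) ^ α * (K t s) * (f s)‖ ^ 2 * t ^ β))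
      ≤ ENNReal.ofReal ((2:ℝ) ^ (2-2*(α.re-(β-1)/2)) * C^2 / (α.re-(β-1)/2)^2)
          * ENNReal.ofReal (∫ s in Ioi (0:ℝ), f s ^ 2 * s ^ β) := by
    calc _ ≤ ∫⁻ t in Ioi (0:ℝ),
          (∫⁻ s in Ioc (0:ℝ) (t/2), ENNReal.ofReal ((s/t) ^ α.re * (2*C/t) * |f s|)) ^ 2
            * ENNReal.ofReal (t ^ β) :=
        lintegral_mono_ae ((ae_restrict_iff' measurableSet_Ioi).2 (ae_of_all _ hpt))
      _ ≤ ENNReal.ofReal ((2:ℝ) ^ (2-2*(α.re-(β-1)/2)) * C^2 / (α.re-(β-1)/2)^2)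
            * ∫⁻ s in Ioi (0:ℝ), ENNReal.ofReal (f s ^ 2 * s ^ β) := schur hC ha f hf
      _ = _ := by rw [hRHSlim]
  calc (∫⁻ t in Ioi (0:ℝ),
        ENNReal.ofReal (‖∫ s in Ioc (0:ℝ) (t/2), ((s / t : ℂ)) ^ α * (K t s) * (f s)‖ ^ 2
          * t ^ β)).toReal
      ≤ (ENNReal.ofReal ((2:ℝ) ^ (2-2*(α.re-(β-1)/2)) * C^2 / (α.re-(β-1)/2)^2)
          * ENNReal.ofReal (∫ s in Ioi (0:ℝ), f s ^ 2 * s ^ β)).toReal :=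
        ENNReal.toReal_mono (ENNReal.mul_ne_top ENNReal.ofReal_ne_top ENNReal.ofReal_ne_top) hEN
    _ = (2:ℝ) ^ (2-2*(α.re-(β-1)/2)) * C^2 / (α.re-(β-1)/2)^2
          * ∫ s in Ioi (0:ℝ), f s ^ 2 * s ^ β := by
        rw [ENNReal.toReal_mul, ENNReal.toReal_ofReal hCnn, ENNReal.toReal_ofReal hRHS0]
end

section
/- Let a, γ, c > 0 and K > (a+γ)/2. Then for all d ≥ 0 and t > 0: ∫₀^∞ s^{a+γ−1} e^{−cs} (1 + (d/t)² s²)^{−K} ds ≤ C(a, γ, c, K) (1 + d/t)^{−a−γ}. -/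
open MeasureTheory Set

/-- `m = 1` case of the contour-integral estimate: for `a, γ, c > 0` and
`K > (a+γ)/2`, uniformly in `d ≥ 0` and `t > 0`,
`∫₀^∞ s^{a+γ−1} e^{−cs} (1 + (d/t)² s²)^{−K} ds ≤ C (1 + d/t)^{−a−γ}`. -/
theorem stmt_18 (a γ c K : ℝ) (ha : 0 < a) (hγ : 0 < γ) (hc : 0 < c)
    (hK : (a + γ) / 2 < K) :
    ∃ C : ℝ, 0 < C ∧ ∀ d t : ℝ, 0 ≤ d → 0 < t →
      ∫ s in Ioi (0:ℝ),
          s ^ (a + γ - 1) * Real.exp (-c * s) * (1 + (d / t) ^ 2 * s ^ 2) ^ (-K)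
        ≤ C * (1 + d / t) ^ (-(a + γ)) := by
  have hb : 0 < a + γ := by linarith
  have h2K : a + γ < 2 * K := by linarith
  have hK0 : 0 < K := by linarith
  have meas_g : Measurable fun u : ℝ => u ^ (a + γ - 1) * (1 + u ^ 2) ^ (-K) := by
    fun_prop
  -- Gamma-type integrand is integrable
  have IG : IntegrableOn (fun s : ℝ => s ^ (a + γ - 1) * Real.exp (-c * s)) (Ioi 0) := by
    have h := integrableOn_rpow_mul_exp_neg_mul_rpow (s := a + γ - 1) (p := 1)
      (by linarith) one_pos hc
    simpa [Real.rpow_one] using h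
  -- the `J` integrand is integrable
  have I1 : IntegrableOn (fun u : ℝ => u ^ (a + γ - 1) * (1 + u ^ 2) ^ (-K)) (Ioc 0 1) := by
    have base : IntegrableOn (fun u : ℝ => u ^ (a + γ - 1)) (Ioc (0:ℝ) 1) := by
      have h := intervalIntegral.intervalIntegrable_rpow' (r := a + γ - 1) (a := (0:ℝ))
        (b := 1) (by linarith)
      rwa [intervalIntegrable_iff_integrableOn_Ioc_of_le zero_le_one] at h
    refine base.mono' meas_g.aestronglyMeasurable.restrict ?_
    filter_upwards [ae_restrict_mem measurableSet_Ioc] with u hu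
    have hu0 : 0 < u := hu.1
    rw [Real.norm_eq_abs, abs_of_nonneg (mul_nonneg (Real.rpow_nonneg hu0.le _)
      (Real.rpow_nonneg (by positivity) _))]
    exact mul_le_of_le_one_right (Real.rpow_nonneg hu0.le _)
      (Real.rpow_le_one_of_one_le_of_nonpos (by nlinarith [sq_nonneg u]) (by linarith))
  have I2 : IntegrableOn (fun u : ℝ => u ^ (a + γ - 1) * (1 + u ^ 2) ^ (-K)) (Ioi 1) := by
    have base : IntegrableOn (fun u : ℝ => u ^ (a + γ - 1 - 2 * K)) (Ioi (1:ℝ)) :=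
      integrableOn_Ioi_rpow_of_lt (by linarith) one_pos
    refine base.mono' meas_g.aestronglyMeasurable.restrict ?_
    filter_upwards [ae_restrict_mem measurableSet_Ioi] with u hu
    have hu1 : (1:ℝ) < u := hu
    have hu0 : (0:ℝ) < u := by linarith
    rw [Real.norm_eq_abs, abs_of_nonneg (mul_nonneg (Real.rpow_nonneg hu0.le _)
      (Real.rpow_nonneg (by positivity) _))]
    have key : (1 + u ^ 2) ^ (-K) ≤ (u ^ 2) ^ (-K) :=
      Real.rpow_le_rpow_of_nonpos (by positivity) (by linarith) (by linarith)
    have heq : u ^ (a + γ - 1) * (u ^ 2) ^ (-K) = u ^ (a + γ - 1 - 2 * K) := by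
      rw [← Real.rpow_natCast u 2, ← Real.rpow_mul hu0.le, ← Real.rpow_add hu0]
      norm_num
      ring_nf
    calc u ^ (a + γ - 1) * (1 + u ^ 2) ^ (-K)
        ≤ u ^ (a + γ - 1) * (u ^ 2) ^ (-K) :=
          mul_le_mul_of_nonneg_left key (Real.rpow_nonneg hu0.le _)
      _ = u ^ (a + γ - 1 - 2 * K) := heq
  have IJ : IntegrableOn (fun u : ℝ => u ^ (a + γ - 1) * (1 + u ^ 2) ^ (-K)) (Ioi 0) := by
    rw [← Ioc_union_Ioi_eq_Ioi (zero_le_one : (0:ℝ) ≤ 1)]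
    exact I1.union I2
  set Gc := ∫ s in Ioi (0:ℝ), s ^ (a + γ - 1) * Real.exp (-c * s) with hGcdef
  set J := ∫ u in Ioi (0:ℝ), u ^ (a + γ - 1) * (1 + u ^ 2) ^ (-K) with hJdef
  have hGc0 : 0 ≤ Gc := setIntegral_nonneg measurableSet_Ioi fun s hs =>
    mul_nonneg (Real.rpow_nonneg (le_of_lt hs) _) (Real.exp_nonneg _)
  have hJ0 : 0 ≤ J := setIntegral_nonneg measurableSet_Ioi fun u hu =>
    mul_nonneg (Real.rpow_nonneg (le_of_lt hu) _) (Real.rpow_nonneg (by positivity) _)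
  have hT : (0:ℝ) < 2 ^ (a + γ) := Real.rpow_pos_of_pos two_pos _
  refine ⟨2 ^ (a + γ) * (Gc + J) + 1, by nlinarith, ?_⟩
  intro d t hd ht
  set r := d / t with hrdef
  have hr0 : 0 ≤ r := div_nonneg hd ht.le
  have h1r : (0:ℝ) < 1 + r := by linarith
  have hP0 : 0 ≤ (1 + r) ^ (-(a + γ)) := Real.rpow_nonneg h1r.le _
  have hfnonneg : ∀ᵐ s ∂(volume.restrict (Ioi (0:ℝ))),
      0 ≤ s ^ (a + γ - 1) * Real.exp (-c * s) * (1 + r ^ 2 * s ^ 2) ^ (-K) := by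
    filter_upwards [ae_restrict_mem measurableSet_Ioi] with s hs
    exact mul_nonneg (mul_nonneg (Real.rpow_nonneg (le_of_lt hs) _) (Real.exp_nonneg _))
      (Real.rpow_nonneg (by positivity) _)
  rcases le_or_gt r 1 with hcase | hcase
  · -- small r : drop the bracket
    have step1 : (∫ s in Ioi (0:ℝ),
        s ^ (a + γ - 1) * Real.exp (-c * s) * (1 + r ^ 2 * s ^ 2) ^ (-K)) ≤ Gc := by
      refine integral_mono_of_nonneg hfnonneg IG ?_
      filter_upwards [ae_restrict_mem measurableSet_Ioi] with s hs
      have h1 : (1 + r ^ 2 * s ^ 2) ^ (-K) ≤ 1 :=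
        Real.rpow_le_one_of_one_le_of_nonpos (by nlinarith [sq_nonneg (r * s)]) (by linarith)
      exact mul_le_of_le_one_right
        (mul_nonneg (Real.rpow_nonneg (le_of_lt hs) _) (Real.exp_nonneg _)) h1
    have h3 : (2:ℝ) ^ (-(a + γ)) ≤ (1 + r) ^ (-(a + γ)) :=
      Real.rpow_le_rpow_of_nonpos h1r (by linarith) (by linarith)
    have h2 : (1:ℝ) ≤ 2 ^ (a + γ) * (1 + r) ^ (-(a + γ)) := by
      calc (1:ℝ) = 2 ^ (a + γ) * 2 ^ (-(a + γ)) := by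
            rw [← Real.rpow_add two_pos, show a + γ + -(a + γ) = 0 from by ring,
              Real.rpow_zero]
        _ ≤ 2 ^ (a + γ) * (1 + r) ^ (-(a + γ)) :=
            mul_le_mul_of_nonneg_left h3 hT.le
    have goal2 : Gc ≤ (2 ^ (a + γ) * (Gc + J) + 1) * (1 + r) ^ (-(a + γ)) := by
      nlinarith [mul_le_mul_of_nonneg_left h2 hGc0, mul_le_mul_of_nonneg_left h2 hJ0, hP0]
    exact step1.trans goal2
  · -- large r : rescale
    have hr0' : 0 < r := lt_trans one_pos hcase
    have hcomp : IntegrableOn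
        (fun s : ℝ => (r * s) ^ (a + γ - 1) * (1 + (r * s) ^ 2) ^ (-K)) (Ioi 0) := by
      have h := (integrableOn_Ioi_comp_mul_left_iff
        (fun u : ℝ => u ^ (a + γ - 1) * (1 + u ^ 2) ^ (-K)) 0 hr0')
      rw [mul_zero] at h
      exact h.mpr IJ
    have hval : (∫ s in Ioi (0:ℝ), (r * s) ^ (a + γ - 1) * (1 + (r * s) ^ 2) ^ (-K))
        = r⁻¹ * J := by
      have h := integral_comp_mul_left_Ioi
        (fun u : ℝ => u ^ (a + γ - 1) * (1 + u ^ 2) ^ (-K)) 0 hr0'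
      rw [mul_zero] at h
      simpa [smul_eq_mul] using h
    have hrb : (0:ℝ) < r ^ (a + γ - 1) := Real.rpow_pos_of_pos hr0' _
    have step1 : (∫ s in Ioi (0:ℝ),
        s ^ (a + γ - 1) * Real.exp (-c * s) * (1 + r ^ 2 * s ^ 2) ^ (-K))
        ≤ ∫ s in Ioi (0:ℝ),
          r ^ (-(a + γ - 1)) * ((r * s) ^ (a + γ - 1) * (1 + (r * s) ^ 2) ^ (-K)) := by
      refine integral_mono_of_nonneg hfnonneg (hcomp.const_mul _) ?_
      filter_upwards [ae_restrict_mem measurableSet_Ioi] with s hs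
      have hs0 : (0:ℝ) < s := hs
      have h1 : (r * s) ^ (a + γ - 1) = r ^ (a + γ - 1) * s ^ (a + γ - 1) :=
        Real.mul_rpow hr0'.le hs0.le
      have h2 : (1 + (r * s) ^ 2) = 1 + r ^ 2 * s ^ 2 := by ring
      have h3 : r ^ (-(a + γ - 1)) * r ^ (a + γ - 1) = 1 := by
        rw [← Real.rpow_add hr0']; simp
      have hexp : Real.exp (-c * s) ≤ 1 := by
        rw [Real.exp_le_one_iff]
        nlinarith
      calc s ^ (a + γ - 1) * Real.exp (-c * s) * (1 + r ^ 2 * s ^ 2) ^ (-K)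
          ≤ s ^ (a + γ - 1) * (1 + r ^ 2 * s ^ 2) ^ (-K) := by
            apply mul_le_mul_of_nonneg_right _ (Real.rpow_nonneg (by positivity) _)
            exact mul_le_of_le_one_right (Real.rpow_nonneg hs0.le _) hexp
        _ = r ^ (-(a + γ - 1)) * ((r * s) ^ (a + γ - 1) * (1 + (r * s) ^ 2) ^ (-K)) := by
            rw [h1, h2, show r ^ (-(a + γ - 1)) * (r ^ (a + γ - 1) * s ^ (a + γ - 1) *
              (1 + r ^ 2 * s ^ 2) ^ (-K)) = (r ^ (-(a + γ - 1)) * r ^ (a + γ - 1)) *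
              (s ^ (a + γ - 1) * (1 + r ^ 2 * s ^ 2) ^ (-K)) from by ring, h3, one_mul]
    have step2 : (∫ s in Ioi (0:ℝ),
        r ^ (-(a + γ - 1)) * ((r * s) ^ (a + γ - 1) * (1 + (r * s) ^ 2) ^ (-K)))
        = r ^ (-(a + γ)) * J := by
      rw [MeasureTheory.integral_const_mul, hval]
      rw [show r⁻¹ = r ^ (-(1:ℝ)) from by rw [Real.rpow_neg_one], ← mul_assoc,
        ← Real.rpow_add hr0', show -(a + γ - 1) + -1 = -(a + γ) from by ring]
    have h5 : (2 * r) ^ (-(a + γ)) ≤ (1 + r) ^ (-(a + γ)) :=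
      Real.rpow_le_rpow_of_nonpos h1r (by linarith) (by linarith)
    have h6 : (2 * r) ^ (-(a + γ)) = 2 ^ (-(a + γ)) * r ^ (-(a + γ)) :=
      Real.mul_rpow (by norm_num) hr0'.le
    have h4 : r ^ (-(a + γ)) ≤ 2 ^ (a + γ) * (1 + r) ^ (-(a + γ)) := by
      calc r ^ (-(a + γ)) = 2 ^ (a + γ) * (2 ^ (-(a + γ)) * r ^ (-(a + γ))) := by
            rw [← mul_assoc, ← Real.rpow_add two_pos, show a + γ + -(a + γ) = 0 from by ring,
              Real.rpow_zero, one_mul]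
        _ = 2 ^ (a + γ) * (2 * r) ^ (-(a + γ)) := by rw [h6]
        _ ≤ 2 ^ (a + γ) * (1 + r) ^ (-(a + γ)) := mul_le_mul_of_nonneg_left h5 hT.le
    have final : r ^ (-(a + γ)) * J ≤ (2 ^ (a + γ) * (Gc + J) + 1) * (1 + r) ^ (-(a + γ)) := by
      nlinarith [mul_le_mul_of_nonneg_right h4 hJ0, hP0,
        mul_nonneg (mul_nonneg hT.le hGc0) hP0]
    calc (∫ s in Ioi (0:ℝ),
        s ^ (a + γ - 1) * Real.exp (-c * s) * (1 + r ^ 2 * s ^ 2) ^ (-K))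
        ≤ r ^ (-(a + γ)) * J := step2 ▸ step1
      _ ≤ (2 ^ (a + γ) * (Gc + J) + 1) * (1 + r) ^ (-(a + γ)) := final
end
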